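/- arXiv:0909.5175 — 7 statements merged into one kernel-verified Lean document; each statement's English description precedes it below -/
import Mathlib

section
/- For every integer d ≥ 1 there exist constants c_d and A_d such that the following holds for every ε ∈ (0,1). Let P be a multilinear polynomial of degree at most d on n variables, with variables ordered so that w_1(P) ≥ … ≥ w_n(P), let L = ⌈c_d · log(1/ε)/ε²⌉, suppose the ε-critical index satisfies K(P,ε) ≥ L, and let Q = P − P_{|L}, where P_{|L}(X_1,…,X_L) = Σ_{I ⊆ [L]} a_I X^I is the restriction of P to its first L variables. Then ‖Q‖ ≤ A_d · √ε · ‖P_{|L}‖, where ‖R‖² = E_{X uniform on {-1,1}^n}[R(X)²]. -/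
open Finset MeasureTheory ProbabilityTheory
open scoped Classical

noncomputable section

/-- The ±1 real value of a Boolean bit (`true ↦ 1`, `false ↦ -1`). -/
def pmOne (b : Bool) : ℝ := if b then 1 else -1

/-- Noise sensitivity at rate `δ` of a Boolean function on the hypercube `{-1,1}^n`:
`Pr[f(X) ≠ f(Z)]` where `X` is uniform and `Z` flips each coordinate of `X`
independently with probability `δ`. -/
def noiseSens {n : ℕ} (δ : ℝ) (f : (Fin n → Bool) → Bool) : ℝ :=
  (1 / 2 ^ n : ℝ) * ∑ x : Fin n → Bool, ∑ s : Fin n → Bool,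
    (∏ i, if s i then δ else 1 - δ) * (if f x ≠ f (fun i => xor (s i) (x i)) then 1 else 0)

/-- Influence of the `i`-th variable: `Pr[f(X) ≠ f(X^{(i)})]`. -/
def influence {n : ℕ} (f : (Fin n → Bool) → Bool) (i : Fin n) : ℝ :=
  (1 / 2 ^ n : ℝ) * ∑ x : Fin n → Bool,
    if f x ≠ f (Function.update x i (!x i)) then 1 else 0

/-- Average sensitivity (total influence). -/
def avgSens {n : ℕ} (f : (Fin n → Bool) → Bool) : ℝ := ∑ i, influence f i

/-- `f` is a degree-`d` polynomial threshold function: `f = sign(P)` for some real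
polynomial of total degree at most `d`, with the convention `sign 0 = 1`. -/
def IsPTF {n : ℕ} (d : ℕ) (f : (Fin n → Bool) → Bool) : Prop :=
  ∃ P : MvPolynomial (Fin n) ℝ, P.totalDegree ≤ d ∧
    ∀ x, (f x = true ↔ 0 ≤ MvPolynomial.eval (fun i => pmOne (x i)) P)

/-- Evaluation of the multilinear polynomial with coefficients `a` at the point `x`. -/
def mlEval {n : ℕ} (a : Finset (Fin n) → ℝ) (x : Fin n → ℝ) : ℝ :=
  ∑ I : Finset (Fin n), a I * ∏ i ∈ I, x i

/-- The multilinear polynomial with coefficients `a` has degree at most `d`. -/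
def DegLE {n : ℕ} (a : Finset (Fin n) → ℝ) (d : ℕ) : Prop :=
  ∀ I, a I ≠ 0 → I.card ≤ d

/-- Squared weight `w_i²` of coordinate `i`: `Σ_{I ∋ i} a_I²`. -/
def wsq {n : ℕ} (a : Finset (Fin n) → ℝ) (i : Fin n) : ℝ :=
  ∑ I ∈ univ.filter (fun I : Finset (Fin n) => i ∈ I), a I ^ 2

/-- `ε`-regularity: `Σ_i w_i⁴ ≤ ε² (Σ_i w_i²)²`. -/
def Regular {n : ℕ} (a : Finset (Fin n) → ℝ) (ε : ℝ) : Prop :=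
  ∑ i, wsq a i ^ 2 ≤ ε ^ 2 * (∑ i, wsq a i) ^ 2

/-- `σ_{k+1}²(P) = Σ_{j ≥ k (0-based)} w_j²` (tail weight, `k` restricted variables). -/
def sigmaSq {n : ℕ} (a : Finset (Fin n) → ℝ) (k : ℕ) : ℝ :=
  ∑ j ∈ univ.filter (fun j : Fin n => k ≤ (j : ℕ)), wsq a j

/-- The variables are ordered by decreasing weight. -/
def OrderedWeights {n : ℕ} (a : Finset (Fin n) → ℝ) : Prop :=
  ∀ i j : Fin n, i ≤ j → wsq a j ≤ wsq a i

/-- The `ε`-critical index `K(P,ε)`: least `k` such that `w_j² ≤ ε² σ_{k+1}²` for all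
`j` beyond the first `k` variables. -/
def critIndex {n : ℕ} (a : Finset (Fin n) → ℝ) (ε : ℝ) : ℕ :=
  sInf {k : ℕ | ∀ j : Fin n, k ≤ (j : ℕ) → wsq a j ≤ ε ^ 2 * sigmaSq a k}

/-- Coefficients (in the variables `Y_j`, `j ≥ K`) of the restriction of the multilinear
polynomial `a` obtained by fixing the first `K` variables to `x`. -/
def restCoeff {n : ℕ} (a : Finset (Fin n) → ℝ) (K : ℕ) (x : Fin n → ℝ)
    (J : Finset (Fin n)) : ℝ :=
  if ∀ j ∈ J, K ≤ (j : ℕ) then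
    ∑ I ∈ univ.filter (fun I : Finset (Fin n) => I.filter (fun i => K ≤ i.val) = J),
      a I * ∏ i ∈ I.filter (fun i => i.val < K), x i
  else 0

/-- Standard Gaussian measure on `ℝ^n`. -/
def gaussn (n : ℕ) : Measure (Fin n → ℝ) := Measure.pi fun _ => gaussianReal 0 1

/-- Gaussian noise sensitivity: `Pr[f(X) ≠ f((1-δ)X + √(2δ-δ²)Y)]` for independent
standard Gaussian vectors `X, Y`. -/
def gns (n : ℕ) (δ : ℝ) (f : (Fin n → ℝ) → ℝ) : ℝ :=
  (((gaussn n).prod (gaussn n))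
    {p | f p.1 ≠ f (fun i => (1 - δ) * p.1 i + Real.sqrt (2 * δ - δ ^ 2) * p.2 i)}).toReal

/-- Normalized probabilists' Hermite polynomial `H_k(x)`. -/
def normHermite (k : ℕ) (x : ℝ) : ℝ :=
  Polynomial.aeval x (Polynomial.hermite k) / Real.sqrt (Nat.factorial k)


lemma wsq_nonneg {n : ℕ} (a : Finset (Fin n) → ℝ) (i : Fin n) : 0 ≤ wsq a i :=
  Finset.sum_nonneg fun _ _ => sq_nonneg _

lemma sigmaSq_nonneg {n : ℕ} (a : Finset (Fin n) → ℝ) (k : ℕ) : 0 ≤ sigmaSq a k :=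
  Finset.sum_nonneg fun i _ => wsq_nonneg a i

lemma sigmaSq_eq {n : ℕ} (a : Finset (Fin n) → ℝ) (L : ℕ) :
    sigmaSq a L = ∑ I : Finset (Fin n), ((I.filter fun i => L ≤ i.val).card : ℝ) * a I ^ 2 := by
  unfold sigmaSq wsq
  simp_rw [Finset.sum_filter (fun I : Finset (Fin n) => _ ∈ I)]
  rw [Finset.sum_comm]
  refine Finset.sum_congr rfl fun I _ => ?_
  rw [← Finset.sum_filter]
  have h : (univ.filter (fun j : Fin n => L ≤ (j : ℕ))).filter (fun j => j ∈ I)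
      = I.filter (fun i => L ≤ i.val) := by
    ext j; simp [and_comm]
  rw [h, Finset.sum_const, nsmul_eq_mul]

lemma tail_le_sigmaSq {n : ℕ} (a : Finset (Fin n) → ℝ) (L : ℕ) :
    ∑ I ∈ univ.filter (fun I : Finset (Fin n) => ¬ ∀ i ∈ I, i.val < L), a I ^ 2
      ≤ sigmaSq a L := by
  rw [sigmaSq_eq, Finset.sum_filter]
  refine Finset.sum_le_sum fun I _ => ?_
  by_cases h : ∀ i ∈ I, i.val < L
  · rw [if_neg (not_not_intro h)]
    positivity
  · rw [if_pos h]
    push_neg at h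
    obtain ⟨i, hi, hLi⟩ := h
    have : 1 ≤ (I.filter fun i => L ≤ i.val).card := by
      refine Finset.card_pos.mpr ⟨i, ?_⟩
      simp [hi, hLi]
    nlinarith [sq_nonneg (a I), (by exact_mod_cast this : (1:ℝ) ≤ ((I.filter fun i => L ≤ i.val).card : ℝ))]

lemma sigmaSq_zero_le {n : ℕ} (a : Finset (Fin n) → ℝ) (d : ℕ) (hdeg : DegLE a d) :
    sigmaSq a 0 ≤ d * ∑ I : Finset (Fin n), a I ^ 2 := by
  rw [sigmaSq_eq, Finset.mul_sum]
  refine Finset.sum_le_sum fun I _ => ?_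
  by_cases hI : a I = 0
  · simp [hI]
  · have h1 : (I.filter fun i => 0 ≤ i.val).card ≤ d := by
      calc (I.filter fun i => 0 ≤ i.val).card ≤ I.card := Finset.card_filter_le _ _
        _ ≤ d := hdeg I hI
    have := sq_nonneg (a I)
    have : ((I.filter fun i => 0 ≤ i.val).card : ℝ) ≤ d := by exact_mod_cast h1
    nlinarith [sq_nonneg (a I)]

lemma sigmaSq_decay {n : ℕ} (a : Finset (Fin n) → ℝ) (ε : ℝ) (hε : 0 < ε) (hε1 : ε < 1)
    (hord : OrderedWeights a) :
    ∀ L : ℕ, L ≤ critIndex a ε → sigmaSq a L ≤ (1 - ε ^ 2) ^ L * sigmaSq a 0 := by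
  intro L
  induction L with
  | zero => intro _; simp
  | succ k ih =>
    intro hk
    have hk' : k < critIndex a ε := Nat.lt_of_succ_le hk
    have hknot : k ∉ {m : ℕ | ∀ j : Fin n, m ≤ (j : ℕ) → wsq a j ≤ ε ^ 2 * sigmaSq a m} :=
      Nat.notMem_of_lt_sInf hk'
    -- k < n
    have hkn : k < n := by
      by_contra hn
      push_neg at hn
      apply hknot
      intro j hj
      exact absurd (lt_of_lt_of_le j.isLt hn) (Nat.not_lt.mpr hj)
    set jk : Fin n := ⟨k, hkn⟩
    -- wsq a jk > ε^2 * sigmaSq a k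
    simp only [Set.mem_setOf_eq, not_forall] at hknot
    obtain ⟨j, hj, hwj⟩ := hknot
    have hjk : jk ≤ j := hj
    have hw : ε ^ 2 * sigmaSq a k < wsq a jk := lt_of_lt_of_le (lt_of_not_ge hwj) (hord jk j hjk)
    -- split
    have hsplit : sigmaSq a k = wsq a jk + sigmaSq a (k + 1) := by
      unfold sigmaSq
      have h : univ.filter (fun j : Fin n => k ≤ (j : ℕ))
          = insert jk (univ.filter fun j : Fin n => k + 1 ≤ (j : ℕ)) := by
        ext x
        simp only [Finset.mem_filter, Finset.mem_univ, true_and, Finset.mem_insert]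
        constructor
        · intro hx
          rcases Nat.eq_or_lt_of_le hx with h | h
          · left; exact Fin.ext h.symm
          · right; exact h
        · rintro (rfl | hx)
          · exact le_refl k
          · omega
      rw [h, Finset.sum_insert (by simp [jk])]
    have hstep : sigmaSq a (k + 1) ≤ (1 - ε ^ 2) * sigmaSq a k := by
      nlinarith [hw, hsplit]
    calc sigmaSq a (k + 1) ≤ (1 - ε ^ 2) * sigmaSq a k := hstep
      _ ≤ (1 - ε ^ 2) * ((1 - ε ^ 2) ^ k * sigmaSq a 0) := by
          have h1 : 0 ≤ 1 - ε ^ 2 := by nlinarith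
          exact mul_le_mul_of_nonneg_left (ih (le_of_lt hk')) h1
      _ = (1 - ε ^ 2) ^ (k + 1) * sigmaSq a 0 := by ring

lemma key_bound (d : ℕ) (hd : 1 ≤ d) (ε : ℝ) (hε : 0 < ε) (hε1 : ε < 1)
    (L : ℕ) (hL : L = ⌈(1 + 8*(d:ℝ)*Real.log (2*d)) * Real.log (1/ε) / ε ^ 2⌉₊) :
    (1 - ε^2)^L ≤ ε / (2*(d:ℝ)) := by
  set D : ℝ := (d : ℝ) with hD
  have hD1 : (1:ℝ) ≤ D := by rw [hD]; exact_mod_cast hd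
  have hlog2D : 0 ≤ Real.log (2*D) := Real.log_nonneg (by linarith)
  set c : ℝ := 1 + 8*D*Real.log (2*D) with hc
  have hcpos : 0 < c := by
    have : 0 ≤ 8*D*Real.log (2*D) := by positivity
    linarith
  have hlog1ε : 0 < Real.log (1/ε) := Real.log_pos (by rw [lt_div_iff₀ hε]; linarith)
  have hL1 : 1 ≤ L := by
    rw [hL, Nat.one_le_ceil_iff]
    positivity
  have h1e2 : 0 ≤ 1 - ε^2 := by nlinarith
  by_cases hcase : 8*D*(1-ε) ≤ 1
  · -- ε close to 1
    calc (1 - ε^2)^L ≤ (1 - ε^2)^1 :=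
          pow_le_pow_of_le_one h1e2 (by nlinarith) hL1
      _ = 1 - ε^2 := pow_one _
      _ ≤ ε / (2*D) := by
          rw [le_div_iff₀ (by positivity)]
          nlinarith [mul_nonneg (sub_nonneg.mpr hε1.le) (sub_nonneg.mpr hD1),
            mul_nonneg (mul_nonneg (by linarith : (0:ℝ) ≤ D) (sub_nonneg.mpr hε1.le)) hε.le,
            mul_nonneg (sub_nonneg.mpr hε1.le) hε.le]
  · push_neg at hcase
    -- -log ε ≥ 1/(8D), in the form 1 ≤ 8D * (-log ε)
    have hlogε : Real.log ε ≤ ε - 1 := Real.log_le_sub_one_of_pos hε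
    have hneglog : 1 ≤ 8*D*(-Real.log ε) := by nlinarith
    have hεL : c * (-Real.log ε) ≤ ε^2 * L := by
      have hceil : c * Real.log (1/ε) / ε ^ 2 ≤ (L : ℝ) := by rw [hL]; exact Nat.le_ceil _
      rw [div_le_iff₀ (by positivity)] at hceil
      rw [one_div, Real.log_inv] at hceil
      nlinarith [hceil]
    calc (1 - ε^2)^L ≤ (Real.exp (-ε^2))^L := by
          apply pow_le_pow_left₀ h1e2
          linarith [Real.add_one_le_exp (-ε^2)]
      _ = Real.exp ((L:ℝ) * (-ε^2)) := (Real.exp_nat_mul _ L).symm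
      _ ≤ Real.exp (Real.log ε - Real.log (2*D)) := by
          apply Real.exp_le_exp.mpr
          have h2 : (8*D*Real.log (2*D)) * (-Real.log ε) ≥ Real.log (2*D) := by
            nlinarith [mul_nonneg hlog2D (by linarith [hneglog] : (0:ℝ) ≤ 8*D*(-Real.log ε) - 1)]
          have : c * (-Real.log ε) = -Real.log ε + (8*D*Real.log (2*D)) * (-Real.log ε) := by
            rw [hc]; ring
          nlinarith [hεL]
      _ = ε / (2*D) := by
          rw [Real.exp_sub, Real.exp_log hε, Real.exp_log (by positivity)]

/-- Claim 5.6: for each `d ≥ 1` there are constants `c_d, A_d` such that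
if the `ε`-critical index of `P` is at least `L = ⌈c_d log(1/ε)/ε²⌉`, then the tail
`Q = P - P_{|L}` satisfies `‖Q‖ ≤ A_d √ε ‖P_{|L}‖`. -/
theorem tail_norm_small (d : ℕ) (hd : 1 ≤ d) :
    ∃ (cd Ad : ℝ), ∀ (ε : ℝ), 0 < ε → ε < 1 →
      ∀ (n : ℕ) (a : Finset (Fin n) → ℝ), DegLE a d → OrderedWeights a →
        ∀ L : ℕ, L = ⌈cd * Real.log (1 / ε) / ε ^ 2⌉₊ → L ≤ critIndex a ε →
          Real.sqrt (∑ I ∈ univ.filter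
              (fun I : Finset (Fin n) => ¬ ∀ i ∈ I, i.val < L), a I ^ 2)
            ≤ Ad * Real.sqrt ε * Real.sqrt (∑ I ∈ univ.filter
              (fun I : Finset (Fin n) => ∀ i ∈ I, i.val < L), a I ^ 2) := by
  refine ⟨1 + 8*(d:ℝ)*Real.log (2*d), 1, ?_⟩
  intro ε hε hε1 n a hdeg hord L hL hLcrit
  set T : ℝ := ∑ I ∈ univ.filter
      (fun I : Finset (Fin n) => ¬ ∀ i ∈ I, i.val < L), a I ^ 2 with hTdef
  set H : ℝ := ∑ I ∈ univ.filter
      (fun I : Finset (Fin n) => ∀ i ∈ I, i.val < L), a I ^ 2 with hHdef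
  have hT0 : 0 ≤ T := Finset.sum_nonneg fun _ _ => sq_nonneg _
  have hH0 : 0 ≤ H := Finset.sum_nonneg fun _ _ => sq_nonneg _
  have hD1 : (1:ℝ) ≤ (d:ℝ) := by exact_mod_cast hd
  have hkey : (1 - ε^2)^L ≤ ε / (2*(d:ℝ)) := key_bound d hd ε hε hε1 L hL
  have htot : H + T = ∑ I : Finset (Fin n), a I ^ 2 := by
    rw [hTdef, hHdef]
    exact Finset.sum_filter_add_sum_filter_not univ _ _
  have h1 : T ≤ sigmaSq a L := tail_le_sigmaSq a L
  have h2 : sigmaSq a L ≤ (1 - ε^2)^L * sigmaSq a 0 := sigmaSq_decay a ε hε hε1 hord L hLcrit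
  have h3 : sigmaSq a 0 ≤ (d:ℝ) * (H + T) := by
    rw [htot]; exact sigmaSq_zero_le a d hdeg
  have h4 : T ≤ ε / (2*(d:ℝ)) * ((d:ℝ) * (H + T)) := by
    calc T ≤ (1 - ε^2)^L * sigmaSq a 0 := le_trans h1 h2
      _ ≤ ε / (2*(d:ℝ)) * ((d:ℝ) * (H + T)) := by
          apply mul_le_mul hkey h3 (sigmaSq_nonneg a 0)
          positivity
  have h5 : ε / (2*(d:ℝ)) * ((d:ℝ) * (H + T)) = ε / 2 * (H + T) := by
    field_simp
  have h6 : T ≤ ε * H := by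
    rw [h5] at h4
    nlinarith
  calc Real.sqrt T ≤ Real.sqrt (ε * H) := Real.sqrt_le_sqrt h6
    _ = Real.sqrt ε * Real.sqrt H := Real.sqrt_mul hε.le H
    _ = 1 * Real.sqrt ε * Real.sqrt H := by ring

end
end

section
/- Let P(X) = Σ_{I ⊆ [n], 0 < |I| ≤ d} a_I X^I be a multilinear polynomial of degree at most d with zero constant term and with ‖P‖² = Σ_I a_I² ≤ 1, let θ ∈ R, and let f(x) = sign(P(x) − θ). Then for every ρ with 0 < ρ < 1 and every δ > 0, NS_ρ(f) ≤ (d+1)·δ + Pr_{X uniform on {-1,1}^n}[ |P(X) − θ| ≤ 2√ρ/δ ]. -/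
open Finset MeasureTheory ProbabilityTheory
open scoped Classical

noncomputable section

namespace NS

def eps (b : Bool) : ℝ := if b then -1 else 1

def chi {n : ℕ} (I : Finset (Fin n)) (x : Fin n → Bool) : ℝ := ∏ i ∈ I, pmOne (x i)

def chiE {n : ℕ} (I : Finset (Fin n)) (s : Fin n → Bool) : ℝ := ∏ i ∈ I, eps (s i)

lemma pmOne_xor (b c : Bool) : pmOne (xor b c) = eps b * pmOne c := by
  cases b <;> cases c <;> simp [pmOne, eps]

lemma sum_prod_bool {n : ℕ} (g : Fin n → Bool → ℝ) :
    ∑ x : Fin n → Bool, ∏ i, g i (x i) = ∏ i, (g i true + g i false) := by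
  have h := Finset.prod_univ_sum (fun _ : Fin n => (Finset.univ : Finset Bool)) g
  simp only [Fintype.piFinset_univ, Fintype.sum_bool] at h
  exact h.symm

lemma chi_eq_prod_univ {n : ℕ} (I : Finset (Fin n)) (x : Fin n → Bool) :
    chi I x = ∏ i, (if i ∈ I then pmOne (x i) else 1) := by
  rw [Finset.prod_ite_mem, Finset.univ_inter]; rfl

lemma chiE_eq_prod_univ {n : ℕ} (I : Finset (Fin n)) (s : Fin n → Bool) :
    chiE I s = ∏ i, (if i ∈ I then eps (s i) else 1) := by
  rw [Finset.prod_ite_mem, Finset.univ_inter]; rfl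

lemma chiE_sq {n : ℕ} (I : Finset (Fin n)) (s : Fin n → Bool) : chiE I s * chiE I s = 1 := by
  rw [chiE, ← Finset.prod_mul_distrib]
  apply Finset.prod_eq_one
  intro i _
  cases s i <;> simp [eps]

lemma sum_chi_mul_chi {n : ℕ} (I J : Finset (Fin n)) :
    ∑ x : Fin n → Bool, chi I x * chi J x = if I = J then (2:ℝ)^n else 0 := by
  have hrw : ∀ x : Fin n → Bool, chi I x * chi J x
      = ∏ i, ((if i ∈ I then pmOne (x i) else 1) * (if i ∈ J then pmOne (x i) else 1)) := by
    intro x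
    rw [Finset.prod_mul_distrib, ← chi_eq_prod_univ, ← chi_eq_prod_univ]
  simp_rw [hrw]
  rw [sum_prod_bool (fun i b => (if i ∈ I then pmOne b else 1) * (if i ∈ J then pmOne b else 1))]
  have hterm : ∀ i : Fin n,
      ((if i ∈ I then pmOne true else 1) * (if i ∈ J then pmOne true else 1)
        + (if i ∈ I then pmOne false else 1) * (if i ∈ J then pmOne false else 1))
      = if (i ∈ I ↔ i ∈ J) then 2 else 0 := by
    intro i
    by_cases hI : i ∈ I <;> by_cases hJ : i ∈ J <;> simp [pmOne, hI, hJ] <;> norm_num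
  simp_rw [hterm]
  by_cases h : I = J
  · subst h
    simp [Finset.prod_const]
  · rw [if_neg h]
    obtain ⟨i, hi⟩ : ∃ i, ¬(i ∈ I ↔ i ∈ J) := by
      by_contra hc
      push_neg at hc
      exact h (Finset.ext fun i => (hc i))
    exact Finset.prod_eq_zero (Finset.mem_univ i) (by rw [if_neg hi])

lemma parseval {n : ℕ} (u : Finset (Fin n) → ℝ) :
    ∑ x : Fin n → Bool, (∑ I, u I * chi I x)^2 = 2^n * ∑ I, u I ^ 2 := by
  have h1 : ∀ x : Fin n → Bool, (∑ I, u I * chi I x)^2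
      = ∑ I, ∑ J, (u I * u J) * (chi I x * chi J x) := by
    intro x
    rw [sq, Finset.sum_mul_sum]
    exact Finset.sum_congr rfl fun I _ => Finset.sum_congr rfl fun J _ => by ring
  simp_rw [h1]
  rw [Finset.sum_comm]
  have h2 : ∀ I : Finset (Fin n),
      ∑ x : Fin n → Bool, ∑ J, (u I * u J) * (chi I x * chi J x) = 2^n * u I ^ 2 := by
    intro I
    rw [Finset.sum_comm]
    have h3 : ∀ J : Finset (Fin n), ∑ x : Fin n → Bool, (u I * u J) * (chi I x * chi J x)
        = (u I * u J) * (if I = J then (2:ℝ)^n else 0) := by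
      intro J
      rw [← Finset.mul_sum, sum_chi_mul_chi]
    simp_rw [h3, mul_ite, mul_zero]
    rw [Finset.sum_ite_eq Finset.univ I (fun J => u I * u J * 2 ^ n)]
    simp [sq]
    ring
  simp_rw [h2]
  rw [← Finset.mul_sum]

lemma sum_w {n : ℕ} (ρ : ℝ) :
    ∑ s : Fin n → Bool, (∏ i, if s i then ρ else 1 - ρ) = 1 := by
  rw [sum_prod_bool (fun _ b => if b then ρ else 1 - ρ)]
  simp

lemma sum_w_chiE {n : ℕ} (ρ : ℝ) (I : Finset (Fin n)) :
    ∑ s : Fin n → Bool, (∏ i, if s i then ρ else 1 - ρ) * chiE I s = (1 - 2*ρ)^I.card := by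
  have hrw : ∀ s : Fin n → Bool, (∏ i, if s i then ρ else 1 - ρ) * chiE I s
      = ∏ i, ((if s i then ρ else 1 - ρ) * (if i ∈ I then eps (s i) else 1)) := by
    intro s
    rw [Finset.prod_mul_distrib, ← chiE_eq_prod_univ]
  simp_rw [hrw]
  rw [sum_prod_bool (fun i b => (if b then ρ else 1 - ρ) * (if i ∈ I then eps b else 1))]
  have hterm : ∀ i : Fin n,
      ((if (true:Bool) then ρ else 1 - ρ) * (if i ∈ I then eps true else 1)
        + (if (false:Bool) then ρ else 1 - ρ) * (if i ∈ I then eps false else 1))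
      = if i ∈ I then 1 - 2*ρ else 1 := by
    intro i
    by_cases hI : i ∈ I <;> norm_num [eps, hI] <;> ring
  exact (Finset.prod_congr rfl fun i _ => hterm i).trans
    (by rw [Finset.prod_ite_mem, Finset.univ_inter, Finset.prod_const])


lemma diff_eq {n : ℕ} (a : Finset (Fin n) → ℝ) (x s : Fin n → Bool) :
    mlEval a (fun i => pmOne (x i)) - mlEval a (fun i => pmOne (xor (s i) (x i)))
      = ∑ I, (a I * (1 - chiE I s)) * chi I x := by
  unfold mlEval
  rw [← Finset.sum_sub_distrib]
  apply Finset.sum_congr rfl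
  intro I _
  have h : ∏ i ∈ I, pmOne (xor (s i) (x i)) = chiE I s * chi I x := by
    rw [chiE, chi, ← Finset.prod_mul_distrib]
    exact Finset.prod_congr rfl fun i _ => pmOne_xor _ _
  rw [h, chi]
  ring

lemma sum_w_one_sub_chiE_sq {n : ℕ} (ρ : ℝ) (I : Finset (Fin n)) :
    ∑ s : Fin n → Bool, (∏ i, if s i then ρ else 1 - ρ) * (1 - chiE I s)^2
      = 2 * (1 - (1 - 2*ρ)^I.card) := by
  have h1 : ∀ s : Fin n → Bool, (∏ i, if s i then ρ else 1 - ρ) * (1 - chiE I s)^2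
      = 2 * (∏ i, if s i then ρ else 1 - ρ)
        - 2 * ((∏ i, if s i then ρ else 1 - ρ) * chiE I s) := by
    intro s
    have h := chiE_sq I s
    have h2 : (1 - chiE I s)^2 = 2 - 2 * chiE I s := by linear_combination h
    rw [h2]; ring
  simp_rw [h1]
  rw [Finset.sum_sub_distrib, ← Finset.mul_sum, ← Finset.mul_sum, sum_w, sum_w_chiE]
  ring

lemma second_moment {n : ℕ} (a : Finset (Fin n) → ℝ) (ρ : ℝ) :
    ∑ x : Fin n → Bool, ∑ s : Fin n → Bool,
      (∏ i, if s i then ρ else 1 - ρ) *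
        (mlEval a (fun i => pmOne (x i)) - mlEval a (fun i => pmOne (xor (s i) (x i))))^2
    = 2^n * ∑ I : Finset (Fin n), a I ^ 2 * (2 * (1 - (1 - 2*ρ)^I.card)) := by
  rw [Finset.sum_comm]
  have h1 : ∀ s : Fin n → Bool,
      ∑ x : Fin n → Bool, (∏ i, if s i then ρ else 1 - ρ) *
        (mlEval a (fun i => pmOne (x i)) - mlEval a (fun i => pmOne (xor (s i) (x i))))^2
      = ∑ I : Finset (Fin n),
          2^n * (a I^2 * ((∏ i, if s i then ρ else 1 - ρ) * (1 - chiE I s)^2)) := by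
    intro s
    rw [← Finset.mul_sum]
    have : ∑ x : Fin n → Bool,
        (mlEval a (fun i => pmOne (x i)) - mlEval a (fun i => pmOne (xor (s i) (x i))))^2
        = 2^n * ∑ I : Finset (Fin n), (a I * (1 - chiE I s))^2 := by
      simp_rw [diff_eq a _ s]
      exact parseval _
    rw [this, Finset.mul_sum, Finset.mul_sum]
    exact Finset.sum_congr rfl fun I _ => by ring
  simp_rw [h1]
  rw [Finset.sum_comm]
  have h2 : ∀ I : Finset (Fin n),
      ∑ s : Fin n → Bool,
        2^n * (a I^2 * ((∏ i, if s i then ρ else 1 - ρ) * (1 - chiE I s)^2))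
      = 2^n * (a I^2 * (2 * (1 - (1 - 2*ρ)^I.card))) := by
    intro I
    rw [← Finset.mul_sum, ← Finset.mul_sum, sum_w_one_sub_chiE_sq]
  simp_rw [h2]
  rw [← Finset.mul_sum]

end NS

/-- Lemma 6.1: for `f = sign(P - θ)` with `P` multilinear of degree at
most `d`, zero constant term and `‖P‖² ≤ 1`, for all `0 < ρ < 1` and `δ > 0`,
`NS_ρ(f) ≤ (d+1)δ + Pr[|P(X) - θ| ≤ 2√ρ/δ]`. -/
theorem noise_sensitivity_vs_anticoncentration (n d : ℕ) (a : Finset (Fin n) → ℝ)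
    (θ : ℝ) (hdeg : DegLE a d) (hconst : a ∅ = 0) (hnorm : ∑ I, a I ^ 2 ≤ 1)
    (f : (Fin n → Bool) → Bool)
    (hf : ∀ x, (f x = true ↔ 0 ≤ mlEval a (fun i => pmOne (x i)) - θ))
    (ρ δ : ℝ) (hρ0 : 0 < ρ) (hρ1 : ρ < 1) (hδ : 0 < δ) :
    noiseSens ρ f ≤ ((d : ℝ) + 1) * δ +
      (1 / 2 ^ n : ℝ) * ∑ x : Fin n → Bool,
        (if |mlEval a (fun i => pmOne (x i)) - θ| ≤ 2 * Real.sqrt ρ / δ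
          then (1 : ℝ) else 0) := by
  classical
  set P : (Fin n → Bool) → ℝ := fun x => mlEval a (fun i => pmOne (x i)) with hP
  set t : ℝ := 2 * Real.sqrt ρ / δ with ht_def
  have hsρ : 0 < Real.sqrt ρ := Real.sqrt_pos.mpr hρ0
  have ht : 0 < t := div_pos (by linarith) hδ
  have hw0 : ∀ s : Fin n → Bool, 0 ≤ ∏ i, if s i then ρ else 1 - ρ := by
    intro s
    apply Finset.prod_nonneg
    intro i _
    by_cases h : s i <;> simp [h] <;> linarith
  have hanty : (0:ℝ) ≤ (1 / 2 ^ n : ℝ) * ∑ x : Fin n → Bool,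
      (if |P x - θ| ≤ t then (1 : ℝ) else 0) := by
    apply mul_nonneg (by positivity)
    apply Finset.sum_nonneg
    intro x _
    split <;> norm_num
  by_cases hδ1 : 1 ≤ δ
  · -- trivial case: NS ≤ 1 ≤ (d+1)δ
    have hNS : noiseSens ρ f ≤ 1 := by
      rw [noiseSens]
      have hS : (∑ x : Fin n → Bool, ∑ s : Fin n → Bool,
            (∏ i, if s i then ρ else 1 - ρ) *
              (if f x ≠ f (fun i => xor (s i) (x i)) then 1 else 0))
          ≤ ∑ _x : Fin n → Bool, (1:ℝ) := by
        apply Finset.sum_le_sum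
        intro x _
        calc ∑ s : Fin n → Bool, (∏ i, if s i then ρ else 1 - ρ) *
              (if f x ≠ f (fun i => xor (s i) (x i)) then 1 else 0)
            ≤ ∑ s : Fin n → Bool, (∏ i, if s i then ρ else 1 - ρ) := by
              apply Finset.sum_le_sum
              intro s _
              have h1 : (if f x ≠ f (fun i => xor (s i) (x i)) then (1:ℝ) else 0) ≤ 1 := by
                split <;> norm_num
              calc (∏ i, if s i then ρ else 1 - ρ) *
                    (if f x ≠ f (fun i => xor (s i) (x i)) then 1 else 0)
                  ≤ (∏ i, if s i then ρ else 1 - ρ) * 1 :=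
                    mul_le_mul_of_nonneg_left h1 (hw0 s)
                _ = _ := mul_one _
          _ = 1 := NS.sum_w ρ
      have hS1 : ∑ _x : Fin n → Bool, (1:ℝ) = 2^n := by
        simp [Finset.card_univ]
      calc (1 / 2 ^ n : ℝ) * ∑ x : Fin n → Bool, ∑ s : Fin n → Bool,
            (∏ i, if s i then ρ else 1 - ρ) *
              (if f x ≠ f (fun i => xor (s i) (x i)) then 1 else 0)
          ≤ (1 / 2 ^ n : ℝ) * (2^n) := by
            apply mul_le_mul_of_nonneg_left _ (by positivity)
            rw [← hS1]; exact hS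
        _ = 1 := by field_simp
    have h1d : (1:ℝ) ≤ ((d:ℝ) + 1) * δ := by
      have h2 : (1:ℝ) ≤ (d:ℝ) + 1 := by
        have := Nat.cast_nonneg (α := ℝ) d
        linarith
      nlinarith
    linarith
  · push_neg at hδ1
    have hkey : ∀ (x s : Fin n → Bool),
        (if f x ≠ f (fun i => xor (s i) (x i)) then (1:ℝ) else 0)
          ≤ (if |P x - θ| ≤ t then (1:ℝ) else 0)
            + (P x - P (fun i => xor (s i) (x i)))^2 / t^2 := by
      intro x s
      set z : Fin n → Bool := fun i => xor (s i) (x i) with hz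
      have hnn : (0:ℝ) ≤ (P x - P z)^2 / t^2 := by positivity
      by_cases h1 : |P x - θ| ≤ t
      · rw [if_pos h1]
        split <;> linarith
      · rw [if_neg h1]
        by_cases h2 : f x = f z
        · rw [if_neg (by simpa using h2)]
          linarith
        · rw [if_pos h2]
          push_neg at h1
          have habs : t < |P x - P z| := by
            cases hfx : f x with
            | false =>
              have hfz : f z = true := by
                cases hfz : f z with
                | false => exact absurd (hfx.trans hfz.symm) h2
                | true => rfl
              have hPx : ¬ (0 ≤ P x - θ) := fun h => by
                rw [(hf x).mpr h] at hfx; exact Bool.noConfusion hfx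
              push_neg at hPx
              have hPz : 0 ≤ P z - θ := (hf z).mp hfz
              have h1' : t < θ - P x := by
                rw [abs_of_neg (by linarith : P x - θ < 0)] at h1; linarith
              calc t < θ - P x := h1'
                _ ≤ P z - P x := by linarith
                _ ≤ |P x - P z| := by rw [abs_sub_comm]; exact le_abs_self _
            | true =>
              have hfz : f z = false := by
                cases hfz : f z with
                | true => exact absurd (hfx.trans hfz.symm) h2
                | false => rfl
              have hPx : 0 ≤ P x - θ := (hf x).mp hfx
              have hPz : ¬ (0 ≤ P z - θ) := fun h => by
                rw [(hf z).mpr h] at hfz; exact Bool.noConfusion hfz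
              push_neg at hPz
              have h1' : t < P x - θ := by
                rw [abs_of_nonneg hPx] at h1; linarith
              calc t < P x - θ := h1'
                _ ≤ P x - P z := by linarith
                _ ≤ |P x - P z| := le_abs_self _
          have hsq : t^2 < (P x - P z)^2 := by
            rw [← sq_abs (P x - P z)]
            exact pow_lt_pow_left₀ habs ht.le (by norm_num)
          have hge : (1:ℝ) ≤ (P x - P z)^2 / t^2 := by
            rw [le_div_iff₀ (by positivity)]
            linarith
          linarith
    have hsum : ∀ x : Fin n → Bool,
        ∑ s : Fin n → Bool, (∏ i, if s i then ρ else 1 - ρ) *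
          (if f x ≠ f (fun i => xor (s i) (x i)) then 1 else 0)
        ≤ (if |P x - θ| ≤ t then (1:ℝ) else 0)
          + (1/t^2) * ∑ s : Fin n → Bool, (∏ i, if s i then ρ else 1 - ρ) *
              (P x - P (fun i => xor (s i) (x i)))^2 := by
      intro x
      calc ∑ s : Fin n → Bool, (∏ i, if s i then ρ else 1 - ρ) *
            (if f x ≠ f (fun i => xor (s i) (x i)) then 1 else 0)
          ≤ ∑ s : Fin n → Bool, (∏ i, if s i then ρ else 1 - ρ) *
              ((if |P x - θ| ≤ t then (1:ℝ) else 0)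
                + (P x - P (fun i => xor (s i) (x i)))^2 / t^2) := by
            apply Finset.sum_le_sum
            intro s _
            exact mul_le_mul_of_nonneg_left (hkey x s) (hw0 s)
        _ = (∑ s : Fin n → Bool, (∏ i, if s i then ρ else 1 - ρ)) *
              (if |P x - θ| ≤ t then (1:ℝ) else 0)
            + (1/t^2) * ∑ s : Fin n → Bool, (∏ i, if s i then ρ else 1 - ρ) *
                (P x - P (fun i => xor (s i) (x i)))^2 := by
            rw [Finset.sum_mul, Finset.mul_sum, ← Finset.sum_add_distrib]
            apply Finset.sum_congr rfl
            intro s _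
            ring
        _ = _ := by rw [NS.sum_w]; ring
    have hM : ∑ I : Finset (Fin n), a I ^ 2 * (2 * (1 - (1 - 2*ρ)^I.card))
        ≤ 4 * ρ * d := by
      calc ∑ I : Finset (Fin n), a I ^ 2 * (2 * (1 - (1 - 2*ρ)^I.card))
          ≤ ∑ I : Finset (Fin n), a I ^ 2 * (4 * ρ * d) := by
            apply Finset.sum_le_sum
            intro I _
            by_cases hI : a I = 0
            · simp [hI]
            · have hk : I.card ≤ d := hdeg I hI
              have hkd : (I.card : ℝ) ≤ d := Nat.cast_le.mpr hk
              have hB : (1:ℝ) + (I.card : ℝ) * (-(2*ρ)) ≤ (1 - 2*ρ)^I.card := by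
                have h := one_add_mul_le_pow (show (-2:ℝ) ≤ -(2*ρ) by linarith) I.card
                have he : (1:ℝ) + -(2*ρ) = 1 - 2*ρ := by ring
                rwa [he] at h
              have hpos : (0:ℝ) ≤ a I ^ 2 := sq_nonneg _
              have h3 : 2 * (1 - (1 - 2*ρ)^I.card) ≤ 4 * ρ * d := by
                nlinarith [hρ0.le]
              exact mul_le_mul_of_nonneg_left h3 hpos
        _ = (∑ I : Finset (Fin n), a I ^ 2) * (4 * ρ * d) := by
            rw [← Finset.sum_mul]
        _ ≤ 1 * (4 * ρ * d) := by
            apply mul_le_mul_of_nonneg_right hnorm (by positivity)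
        _ = 4 * ρ * d := one_mul _
    have hsm2 : ∑ x : Fin n → Bool, ∑ s : Fin n → Bool,
        (∏ i, if s i then ρ else 1 - ρ) * (P x - P (fun i => xor (s i) (x i)))^2
        = 2^n * ∑ I : Finset (Fin n), a I ^ 2 * (2 * (1 - (1 - 2*ρ)^I.card)) :=
      NS.second_moment a ρ
    rw [noiseSens]
    calc (1 / 2 ^ n : ℝ) * ∑ x : Fin n → Bool, ∑ s : Fin n → Bool,
          (∏ i, if s i then ρ else 1 - ρ) *
            (if f x ≠ f (fun i => xor (s i) (x i)) then 1 else 0)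
        ≤ (1 / 2 ^ n : ℝ) * ∑ x : Fin n → Bool,
            ((if |P x - θ| ≤ t then (1:ℝ) else 0)
              + (1/t^2) * ∑ s : Fin n → Bool, (∏ i, if s i then ρ else 1 - ρ) *
                  (P x - P (fun i => xor (s i) (x i)))^2) := by
          apply mul_le_mul_of_nonneg_left _ (by positivity)
          exact Finset.sum_le_sum fun x _ => hsum x
      _ = (1 / 2 ^ n : ℝ) * ∑ x : Fin n → Bool, (if |P x - θ| ≤ t then (1:ℝ) else 0)
          + (1/t^2) * ((1 / 2 ^ n : ℝ) * ∑ x : Fin n → Bool,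
              ∑ s : Fin n → Bool, (∏ i, if s i then ρ else 1 - ρ) *
                (P x - P (fun i => xor (s i) (x i)))^2) := by
          rw [Finset.sum_add_distrib, ← Finset.mul_sum]
          ring
      _ ≤ (1 / 2 ^ n : ℝ) * ∑ x : Fin n → Bool, (if |P x - θ| ≤ t then (1:ℝ) else 0)
          + (1/t^2) * (4 * ρ * d) := by
          rw [hsm2]
          have hq : (1 / 2 ^ n : ℝ) * (2^n * ∑ I : Finset (Fin n),
              a I ^ 2 * (2 * (1 - (1 - 2*ρ)^I.card)))
              = ∑ I : Finset (Fin n), a I ^ 2 * (2 * (1 - (1 - 2*ρ)^I.card)) := by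
            rw [← mul_assoc, one_div, inv_mul_cancel₀ (by positivity : ((2:ℝ)^n) ≠ 0), one_mul]
          rw [hq]
          have h2 : (0:ℝ) ≤ 1/t^2 := by positivity
          have := mul_le_mul_of_nonneg_left hM h2
          linarith
      _ ≤ ((d : ℝ) + 1) * δ + (1 / 2 ^ n : ℝ) * ∑ x : Fin n → Bool,
            (if |P x - θ| ≤ t then (1:ℝ) else 0) := by
          have htsq : t^2 = 4 * ρ / δ^2 := by
            rw [ht_def, div_pow, mul_pow, Real.sq_sqrt hρ0.le]
            ring
          have hval : (1/t^2) * (4 * ρ * d) = d * δ^2 := by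
            rw [htsq]
            field_simp
          rw [hval]
          have hδδ : (0:ℝ) ≤ δ * (1 - δ) := mul_nonneg hδ.le (by linarith)
          have hd0 : (0:ℝ) ≤ (d:ℝ) := Nat.cast_nonneg d
          have hd2 : (d:ℝ) * δ^2 ≤ ((d:ℝ) + 1) * δ := by nlinarith
          linarith


end
end

section
/- For every Boolean function f : {-1,1}^n → {-1,1} with n ≥ 1, AS(f) ≤ 2·n·e · NS_{1/n}(f). -/
open Finset MeasureTheory ProbabilityTheory
open scoped Classical

noncomputable section

/-- Lemma 7.1: for every Boolean function `f` on `{-1,1}^n`,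
`AS(f) ≤ 2·n·e·NS_{1/n}(f)`. -/
theorem avgSens_le_noiseSens (n : ℕ) (hn : 1 ≤ n) (f : (Fin n → Bool) → Bool) :
    avgSens f ≤ 2 * (n : ℝ) * Real.exp 1 * noiseSens (1 / (n : ℝ)) f := by
  have hn0 : (0:ℝ) < n := by exact_mod_cast hn
  set δ : ℝ := 1 / (n : ℝ) with hδ
  have hδ0 : 0 ≤ δ := by positivity
  have hδ1 : δ ≤ 1 := by
    rw [hδ, div_le_one hn0]; exact_mod_cast hn
  set c : ℝ := δ * (1 - δ) ^ (n - 1) with hc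
  have hc0 : 0 ≤ c := by
    apply mul_nonneg hδ0 (pow_nonneg (by linarith) _)
  -- nonnegativity of the summands of noiseSens
  have hterm : ∀ (x s : Fin n → Bool),
      0 ≤ (∏ i, if s i then δ else 1 - δ) *
        (if f x ≠ f (fun i => xor (s i) (x i)) then (1:ℝ) else 0) := by
    intro x s
    apply mul_nonneg
    · exact Finset.prod_nonneg fun i _ => by
        by_cases h : s i <;> simp [h] <;> linarith
    · by_cases h : f x ≠ f (fun i => xor (s i) (x i)) <;> simp [h]
  have hNS : 0 ≤ noiseSens δ f := by
    apply mul_nonneg (by positivity)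
    exact Finset.sum_nonneg fun x _ => Finset.sum_nonneg fun s _ => hterm x s
  have hAS : 0 ≤ avgSens f := by
    apply Finset.sum_nonneg fun i _ => ?_
    apply mul_nonneg (by positivity)
    apply Finset.sum_nonneg fun x _ => ?_
    by_cases h : f x ≠ f (Function.update x i (!x i)) <;> simp [h]
  -- key inequality
  have key : c * avgSens f ≤ noiseSens δ f := by
    have hx : ∀ x : Fin n → Bool,
        c * ∑ i : Fin n, (if f x ≠ f (Function.update x i (!x i)) then (1:ℝ) else 0)
        ≤ ∑ s : Fin n → Bool, (∏ i, if s i then δ else 1 - δ) *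
            (if f x ≠ f (fun i => xor (s i) (x i)) then 1 else 0) := by
      intro x
      rw [Finset.mul_sum]
      have hinj : Set.InjOn (fun i : Fin n => (fun j => decide (j = i) : Fin n → Bool))
          ↑(univ : Finset (Fin n)) := by
        intro i _ j _ h
        have := congrFun h i
        simpa using this
      have heq : ∀ i : Fin n,
          c * (if f x ≠ f (Function.update x i (!x i)) then (1:ℝ) else 0)
          = (∏ k, if (fun j => decide (j = i)) k then δ else 1 - δ) *
            (if f x ≠ f (fun k => xor ((fun j => decide (j = i)) k) (x k)) then 1 else 0) := by
        intro i
        have h1 : (∏ k, if (fun j => decide (j = i)) k then δ else 1 - δ) = c := by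
          simp only [decide_eq_true_eq]
          rw [← Finset.mul_prod_erase univ _ (mem_univ i)]
          simp only [if_pos rfl]
          rw [hc]
          congr 1
          rw [Finset.prod_congr rfl (fun j hj => if_neg (Finset.mem_erase.1 hj).1),
            Finset.prod_const, Finset.card_erase_of_mem (mem_univ i), Finset.card_univ,
            Fintype.card_fin]
        have h2 : (fun k => xor (decide (k = i)) (x k)) = Function.update x i (!x i) := by
          funext k
          by_cases h : k = i
          · subst h; simp
          · simp [h, Function.update_of_ne h]
        rw [h1, h2]
      calc ∑ i : Fin n, c * (if f x ≠ f (Function.update x i (!x i)) then (1:ℝ) else 0)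
          = ∑ s ∈ (univ : Finset (Fin n)).image (fun i => (fun j => decide (j = i) : Fin n → Bool)),
              (∏ k, if s k then δ else 1 - δ) *
              (if f x ≠ f (fun k => xor (s k) (x k)) then 1 else 0) := by
            rw [Finset.sum_image (fun i hi j hj h => hinj hi hj h)]
            exact Finset.sum_congr rfl fun i _ => heq i
        _ ≤ ∑ s : Fin n → Bool, (∏ k, if s k then δ else 1 - δ) *
              (if f x ≠ f (fun k => xor (s k) (x k)) then 1 else 0) :=
            Finset.sum_le_sum_of_subset_of_nonneg (Finset.subset_univ _)
              (fun s _ _ => hterm x s)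
    have alg : ∀ (a : Fin n → (Fin n → Bool) → ℝ),
        c * ∑ i : Fin n, (1 / 2 ^ n : ℝ) * ∑ x : Fin n → Bool, a i x
        = (1 / 2 ^ n : ℝ) * ∑ x : Fin n → Bool, c * ∑ i : Fin n, a i x := by
      intro a
      simp only [Finset.mul_sum]
      rw [Finset.sum_comm]
      exact Finset.sum_congr rfl fun i _ => Finset.sum_congr rfl fun x _ => by ring
    unfold avgSens influence noiseSens
    rw [alg]
    apply mul_le_mul_of_nonneg_left _ (by positivity)
    exact Finset.sum_le_sum fun x _ => hx x
  -- lower bound on c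
  have hec : 1 / ((n:ℝ) * Real.exp 1) ≤ c := by
    have hpow : (Real.exp 1)⁻¹ ≤ (1 - δ) ^ (n - 1) := by
      rw [← Real.exp_neg]
      rcases eq_or_lt_of_le hn with h1 | h2
      · rw [← h1]
        simpa using (Real.exp_le_one_iff.mpr (by norm_num) : Real.exp (-1) ≤ 1)
      · have hm : 1 ≤ n - 1 := by omega
        have hmR : (0:ℝ) < ((n - 1 : ℕ) : ℝ) := by exact_mod_cast hm
        have hcast : ((n - 1 : ℕ) : ℝ) = (n : ℝ) - 1 := by
          have : (1:ℕ) ≤ n := hn; push_cast [this]; ring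
        have hn1 : (0:ℝ) < (n:ℝ) - 1 := by rw [← hcast]; exact hmR
        have hbase : Real.exp (-(1 / ((n:ℝ) - 1))) ≤ 1 - δ := by
          have h := Real.add_one_le_exp (1 / ((n:ℝ) - 1))
          rw [Real.exp_neg]
          rw [inv_le_comm₀ (Real.exp_pos _) (by rw [hδ]; rw [sub_pos, div_lt_one hn0]; exact_mod_cast h2)]
          calc (1 - δ)⁻¹ = 1 + 1 / ((n:ℝ) - 1) := by
                rw [hδ]; field_simp; ring
          _ ≤ Real.exp (1 / ((n:ℝ) - 1)) := by linarith
        calc Real.exp (-1) = Real.exp (-(1 / ((n:ℝ) - 1))) ^ (n - 1) := by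
              rw [← Real.exp_nat_mul, hcast, mul_neg, mul_one_div,
                div_self (ne_of_gt hn1)]
          _ ≤ (1 - δ) ^ (n - 1) :=
              pow_le_pow_left₀ (Real.exp_pos _).le hbase _
    calc 1 / ((n:ℝ) * Real.exp 1) = δ * (Real.exp 1)⁻¹ := by
          rw [hδ]; rw [one_div, mul_inv, one_div]
      _ ≤ δ * (1 - δ) ^ (n - 1) := mul_le_mul_of_nonneg_left hpow hδ0
      _ = c := hc.symm
  -- conclude
  have h1 : avgSens f ≤ (n:ℝ) * Real.exp 1 * noiseSens δ f := by
    have h2 : 1 / ((n:ℝ) * Real.exp 1) * avgSens f ≤ c * avgSens f :=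
      mul_le_mul_of_nonneg_right hec hAS
    have h3 := le_trans h2 key
    rw [div_mul_eq_mul_div, one_mul, div_le_iff₀ (by positivity)] at h3
    linarith
  have hprod : 0 ≤ (n:ℝ) * Real.exp 1 * noiseSens δ f :=
    mul_nonneg (mul_nonneg hn0.le (Real.exp_pos 1).le) hNS
  linarith

end
end

section
/- For every n ≥ 1, every d ≥ 1, and every degree-d polynomial threshold function f : {-1,1}^n → {-1,1}, the average sensitivity satisfies AS(f) ≤ 3 · n^{1 - 2^{-d}}. -/
open Finset MeasureTheory ProbabilityTheory
open scoped Classical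

noncomputable section

open MvPolynomial

namespace AuxAS

variable {n : ℕ}

def pmx (x : Fin n → Bool) : Fin n → ℝ := fun i => pmOne (x i)

def flip (i : Fin n) (x : Fin n → Bool) : Fin n → Bool := Function.update x i (!x i)

lemma pmOne_mul_self (b : Bool) : pmOne b * pmOne b = 1 := by cases b <;> simp [pmOne]

lemma pmOne_not (b : Bool) : pmOne (!b) = -pmOne b := by cases b <;> simp [pmOne]

lemma abs_pmOne (b : Bool) : |pmOne b| = 1 := by cases b <;> simp [pmOne]

lemma flip_apply_ne {i j : Fin n} (x : Fin n → Bool) (h : j ≠ i) : flip i x j = x j :=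
  Function.update_of_ne h _ _

lemma flip_apply_self (i : Fin n) (x : Fin n → Bool) : flip i x i = !x i :=
  Function.update_self _ _ _

lemma flip_involutive (i : Fin n) : Function.Involutive (flip i) := by
  intro x; funext j
  by_cases h : j = i
  · subst h; simp [flip]
  · simp [flip, Function.update_of_ne h]

lemma sum_flip (i : Fin n) (h : (Fin n → Bool) → ℝ) :
    ∑ x : Fin n → Bool, h (flip i x) = ∑ x : Fin n → Bool, h x :=
  Fintype.sum_bijective (flip i) (flip_involutive i).bijective _ _ (fun _ => rfl)

lemma sum_avg_flip (i : Fin n) (h : (Fin n → Bool) → ℝ) :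
    ∑ x : Fin n → Bool, h x = ∑ x : Fin n → Bool, (h x + h (flip i x)) / 2 := by
  have h1 := sum_flip i h
  have : ∑ x : Fin n → Bool, (h x + h (flip i x)) / 2
      = ((∑ x : Fin n → Bool, h x) + ∑ x : Fin n → Bool, h (flip i x)) / 2 := by
    rw [← Finset.sum_add_distrib, Finset.sum_div]
  rw [this, h1]; ring


/-- discrete derivative polynomial: collects monomials odd in `X i`, with `X i` removed. -/
def dPoly (P : MvPolynomial (Fin n) ℝ) (i : Fin n) : MvPolynomial (Fin n) ℝ :=
  ∑ α ∈ P.support, if Odd (α i) then monomial (α.erase i) (P.coeff α) else 0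

lemma dPoly_totalDegree_le {P : MvPolynomial (Fin n) ℝ} {d : ℕ} (i : Fin n)
    (hP : P.totalDegree ≤ d + 1) : (dPoly P i).totalDegree ≤ d := by
  refine (totalDegree_finset_sum _ _).trans ?_
  refine Finset.sup_le fun α hα => ?_
  by_cases hodd : Odd (α i)
  · rw [if_pos hodd]
    have hc : P.coeff α ≠ 0 := (mem_support_iff).1 hα
    rw [totalDegree_monomial _ hc]
    have hsum : ((α.erase i).sum fun _ e => e) = ∑ j ∈ α.support.erase i, α j := by
      rw [Finsupp.sum]
      rw [Finsupp.support_erase]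
      refine Finset.sum_congr rfl fun j hj => ?_
      exact Finsupp.erase_ne (Finset.ne_of_mem_erase hj)
    have hi : i ∈ α.support := by
      rw [Finsupp.mem_support_iff]
      rcases hodd with ⟨m, hm⟩; omega
    have htot : (∑ j ∈ α.support, α j) ≤ d + 1 := by
      have := le_totalDegree (p := P) hα
      simpa [Finsupp.sum] using this.trans hP
    have hsplit : (∑ j ∈ α.support.erase i, α j) + α i = ∑ j ∈ α.support, α j :=
      Finset.sum_erase_add _ _ hi
    have h1 : 1 ≤ α i := by rcases hodd with ⟨m, hm⟩; omega
    omega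
  · rw [if_neg hodd]; simp

lemma eval_dPoly (P : MvPolynomial (Fin n) ℝ) (i : Fin n) (y : Fin n → ℝ) :
    eval y (dPoly P i) = ∑ α ∈ P.support,
      if Odd (α i) then P.coeff α * ∏ j ∈ α.support.erase i, y j ^ α j else 0 := by
  rw [dPoly, map_sum]
  refine Finset.sum_congr rfl fun α _ => ?_
  by_cases hodd : Odd (α i)
  · rw [if_pos hodd, if_pos hodd, eval_monomial]
    congr 1
    rw [Finsupp.prod, Finsupp.support_erase]
    refine Finset.prod_congr rfl fun j hj => ?_
    rw [Finsupp.erase_ne (Finset.ne_of_mem_erase hj)]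
  · rw [if_neg hodd, if_neg hodd, map_zero]

lemma pmx_update_ne (x : Fin n → Bool) (i j : Fin n) (b : Bool) (h : j ≠ i) :
    pmx (Function.update x i b) j = pmx x j := by
  simp [pmx, Function.update_of_ne h]

lemma eval_dPoly_update (P : MvPolynomial (Fin n) ℝ) (i : Fin n) (x : Fin n → Bool) (b : Bool) :
    eval (pmx (Function.update x i b)) (dPoly P i) = eval (pmx x) (dPoly P i) := by
  rw [eval_dPoly, eval_dPoly]
  refine Finset.sum_congr rfl fun α _ => ?_
  by_cases hodd : Odd (α i)
  · rw [if_pos hodd, if_pos hodd]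
    congr 1
    refine Finset.prod_congr rfl fun j hj => ?_
    rw [pmx_update_ne x i j b (Finset.ne_of_mem_erase hj)]
  · rw [if_neg hodd, if_neg hodd]

lemma pmOne_pow (b : Bool) (k : ℕ) : pmOne b ^ k = if Odd k then pmOne b else 1 := by
  cases b
  · have : pmOne false = -1 := by simp [pmOne]
    rw [this]
    by_cases h : Odd k
    · rw [if_pos h, Odd.neg_one_pow h]
    · rw [if_neg h, Even.neg_one_pow (Nat.not_odd_iff_even.1 h)]
  · simp [pmOne]

/-- Key identity: difference of evals at the two settings of coordinate `i`. -/
lemma eval_update_sub (P : MvPolynomial (Fin n) ℝ) (i : Fin n) (x : Fin n → Bool) :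
    eval (pmx (Function.update x i true)) P - eval (pmx (Function.update x i false)) P
      = 2 * eval (pmx x) (dPoly P i) := by
  rw [eval_eq, eval_eq, eval_dPoly, ← Finset.sum_sub_distrib, Finset.mul_sum]
  refine Finset.sum_congr rfl fun α hα => ?_
  by_cases hi : i ∈ α.support
  · have hsplit : ∀ b : Bool,
        (∏ j ∈ α.support, pmx (Function.update x i b) j ^ α j)
          = pmOne b ^ α i * ∏ j ∈ α.support.erase i, pmx x j ^ α j := by
      intro b
      rw [← Finset.mul_prod_erase _ _ hi]
      congr 1
      · simp [pmx, Function.update_self]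
      · refine Finset.prod_congr rfl fun j hj => ?_
        rw [pmx_update_ne x i j b (Finset.ne_of_mem_erase hj)]
    rw [hsplit, hsplit]
    by_cases hodd : Odd (α i)
    · rw [if_pos hodd, pmOne_pow, pmOne_pow, if_pos hodd, if_pos hodd]
      simp [pmOne]; ring
    · rw [if_neg hodd, pmOne_pow, pmOne_pow, if_neg hodd, if_neg hodd]
      ring
  · have hzero : α i = 0 := Finsupp.notMem_support_iff.1 hi
    have hodd : ¬ Odd (α i) := by rw [hzero]; simp
    rw [if_neg hodd]
    have heq : ∀ b : Bool,
        (∏ j ∈ α.support, pmx (Function.update x i b) j ^ α j)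
          = ∏ j ∈ α.support, pmx x j ^ α j := by
      intro b
      refine Finset.prod_congr rfl fun j hj => ?_
      have : j ≠ i := fun h => hi (h ▸ hj)
      rw [pmx_update_ne x i j b this]
    rw [heq, heq]
    ring


lemma eval_flip_sub (P : MvPolynomial (Fin n) ℝ) (i : Fin n) (x : Fin n → Bool) :
    eval (pmx x) P - eval (pmx (flip i x)) P
      = pmOne (x i) * (2 * eval (pmx x) (dPoly P i)) := by
  have hx : Function.update x i (x i) = x := Function.update_eq_self i x
  have hsub := eval_update_sub P i x
  cases hxi : x i
  · have h1 : flip i x = Function.update x i true := by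
      rw [flip, hxi]; simp
    have h2 : Function.update x i false = x := by rw [← hxi]; exact hx
    rw [h2] at hsub
    rw [h1]
    have hpm : pmOne false = -1 := by simp [pmOne]
    rw [hpm]
    linarith
  · have h1 : flip i x = Function.update x i false := by
      rw [flip, hxi]; simp
    have h2 : Function.update x i true = x := by rw [← hxi]; exact hx
    rw [h2] at hsub
    rw [h1]
    have hpm : pmOne true = 1 := by simp [pmOne]
    rw [hpm]
    linarith

section Main

variable (P : MvPolynomial (Fin n) ℝ) (f : (Fin n → Bool) → Bool)

/-- The derivative PTF in direction `i`. -/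
def gfun (i : Fin n) (x : Fin n → Bool) : Bool :=
  if 0 ≤ eval (pmx x) (dPoly P i) then true else false

lemma gfun_iff (i : Fin n) (x : Fin n → Bool) :
    gfun P i x = true ↔ 0 ≤ eval (pmx x) (dPoly P i) := by
  unfold gfun; split_ifs with h <;> simp [h]

lemma gfun_flip (i : Fin n) (x : Fin n → Bool) : gfun P i (flip i x) = gfun P i x := by
  unfold gfun
  rw [show flip i x = Function.update x i (!x i) from rfl, eval_dPoly_update]

def G (i : Fin n) (x : Fin n → Bool) : ℝ := pmOne (gfun P i x)

lemma G_flip (i : Fin n) (x : Fin n → Bool) : G P i (flip i x) = G P i x := by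
  rw [G, G, gfun_flip]

/-- Pointwise key identity: the sensitivity indicator equals `D_i f · sign(Q_i)`. -/
lemma key_pointwise (hf : ∀ x, (f x = true ↔ 0 ≤ eval (pmx x) P)) (i : Fin n) (x : Fin n → Bool) :
    pmOne (x i) * (pmOne (f x) - pmOne (f (flip i x))) / 2 * G P i x
      = (if f x ≠ f (flip i x) then (1 : ℝ) else 0) := by
  set q := eval (pmx x) (dPoly P i) with hq
  have hsub := eval_flip_sub P i x
  have hGpos : 0 ≤ q → G P i x = 1 := by
    intro h; rw [G, (gfun_iff P i x).2 h]; simp [pmOne]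
  have hGneg : q < 0 → G P i x = -1 := by
    intro h
    have : gfun P i x = false := by
      unfold gfun; rw [if_neg (not_le.2 h)]
    rw [G, this]; simp [pmOne]
  by_cases hsame : f x = f (flip i x)
  · rw [if_neg (by simp [hsame]), hsame]
    ring
  · rw [if_pos hsame]
    have h1 := hf x
    have h2 := hf (flip i x)
    cases hfx : f x <;> cases hfx' : f (flip i x) <;>
      simp [hfx, hfx'] at hsame h1 h2 ⊢
    · -- f x = false, f x' = true : P(x) < 0 ≤ P(x')
      have hPx : eval (pmx x) P < 0 := h1
      have hPx' : 0 ≤ eval (pmx (flip i x)) P := h2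
      have hkey : pmOne (x i) * (2 * q) < 0 := by linarith [hsub]
      cases hxi : x i
      · have hpm : pmOne false = -1 := by simp [pmOne]
        rw [hxi, hpm] at hkey
        have hqpos : 0 < q := by nlinarith
        rw [hGpos hqpos.le]
        norm_num [pmOne]
      · have hpm : pmOne true = 1 := by simp [pmOne]
        rw [hxi, hpm] at hkey
        have hqneg : q < 0 := by nlinarith
        rw [hGneg hqneg]
        norm_num [pmOne]
    · -- f x = true, f x' = false
      have hPx : 0 ≤ eval (pmx x) P := h1
      have hPx' : eval (pmx (flip i x)) P < 0 := h2
      have hkey : 0 < pmOne (x i) * (2 * q) := by linarith [hsub]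
      cases hxi : x i
      · have hpm : pmOne false = -1 := by simp [pmOne]
        rw [hxi, hpm] at hkey
        have hqneg : q < 0 := by nlinarith
        rw [hGneg hqneg]
        norm_num [pmOne]
      · have hpm : pmOne true = 1 := by simp [pmOne]
        rw [hxi, hpm] at hkey
        have hqpos : 0 < q := by nlinarith
        rw [hGpos hqpos.le]
        norm_num [pmOne]

end Main

lemma influence_nonneg (f : (Fin n → Bool) → Bool) (i : Fin n) : 0 ≤ influence f i := by
  rw [influence]
  refine mul_nonneg (by positivity) (Finset.sum_nonneg fun x _ => ?_)
  split_ifs <;> norm_num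

lemma avgSens_nonneg (f : (Fin n → Bool) → Bool) : 0 ≤ avgSens f :=
  Finset.sum_nonneg fun i _ => influence_nonneg f i

lemma influence_sum (f : (Fin n → Bool) → Bool) (i : Fin n) :
    (2 : ℝ) ^ n * influence f i
      = ∑ x : Fin n → Bool, (if f x ≠ f (flip i x) then (1 : ℝ) else 0) := by
  have h : (∑ x : Fin n → Bool, (if f x ≠ f (flip i x) then (1 : ℝ) else 0))
      = ∑ x : Fin n → Bool, (if f x ≠ f (Function.update x i (!x i)) then (1 : ℝ) else 0) := by
    simp only [flip]; congr
  rw [h, influence]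
  have h2 : ((2 : ℝ) ^ n) ≠ 0 := by positivity
  field_simp

lemma card_cube : ((Finset.univ : Finset (Fin n → Bool)).card : ℝ) = 2 ^ n := by
  simp [Finset.card_univ]


section Main2

variable (P : MvPolynomial (Fin n) ℝ) (f : (Fin n → Bool) → Bool)

lemma sum_FG (hf : ∀ x, (f x = true ↔ 0 ≤ eval (pmx x) P)) (i : Fin n) :
    ∑ x : Fin n → Bool, pmOne (f x) * pmOne (x i) * G P i x
      = (2 : ℝ) ^ n * influence f i := by
  rw [influence_sum]
  rw [sum_avg_flip i (fun x => pmOne (f x) * pmOne (x i) * G P i x)]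
  refine Finset.sum_congr rfl fun x _ => ?_
  have hkey := key_pointwise P f hf i x
  rw [← hkey, G_flip, flip_apply_self, pmOne_not]
  ring

lemma abs_G (i : Fin n) (x : Fin n → Bool) : |G P i x| = 1 := abs_pmOne _

lemma cross_bound (i j : Fin n) (hij : j ≠ i) :
    |∑ x : Fin n → Bool, (pmOne (x i) * G P i x) * (pmOne (x j) * G P j x)|
      ≤ (2 : ℝ) ^ n * influence (gfun P j) i := by
  rw [influence_sum]
  rw [sum_avg_flip i (fun x => (pmOne (x i) * G P i x) * (pmOne (x j) * G P j x))]
  refine (Finset.abs_sum_le_sum_abs _ _).trans (Finset.sum_le_sum fun x _ => ?_)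
  have h1 : flip i x j = x j := flip_apply_ne x hij
  rw [G_flip, flip_apply_self, pmOne_not, h1]
  have habs : |pmOne (x i) * G P i x * pmOne (x j)| = 1 := by
    rw [abs_mul, abs_mul, abs_pmOne, abs_pmOne, abs_G]; norm_num
  have hexp : (pmOne (x i) * G P i x * (pmOne (x j) * G P j x)
        + -pmOne (x i) * G P i x * (pmOne (x j) * G P j (flip i x))) / 2
      = (pmOne (x i) * G P i x * pmOne (x j)) * ((G P j x - G P j (flip i x)) / 2) := by
    ring
  rw [hexp, abs_mul, habs, one_mul]
  by_cases hsame : gfun P j x = gfun P j (flip i x)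
  · rw [if_neg (by simp [hsame])]
    rw [G, G, hsame]
    simp
  · rw [if_pos (by simpa using hsame)]
    rw [G, G]
    cases hjx : gfun P j x <;> cases hjx' : gfun P j (flip i x) <;>
      simp [hjx, hjx'] at hsame ⊢ <;> norm_num [pmOne]


end Main2

/-- Main inductive bound. -/
lemma main_bound : ∀ (d : ℕ) {n : ℕ} (f : (Fin n → Bool) → Bool), 1 ≤ n → IsPTF d f →
    avgSens f ≤ 2 * (n : ℝ) ^ ((1 : ℝ) - (1 / 2 : ℝ) ^ d) := by
  intro d
  induction d with
  | zero =>
    intro n f hn hf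
    obtain ⟨P, hdeg, hP⟩ := hf
    have hconst : ∀ x y : Fin n → Bool,
        (eval fun i => pmOne (x i)) P = (eval fun i => pmOne (y i)) P := by
      intro x y
      rw [eval_eq, eval_eq]
      refine Finset.sum_congr rfl fun α hα => ?_
      have hsum : (α.sum fun _ e => e) = 0 := Nat.le_zero.1 ((le_totalDegree hα).trans hdeg)
      have hall : ∀ t, α t = 0 := by
        simpa [Finsupp.sum, Finset.sum_eq_zero_iff] using hsum
      have hsupp : α.support = ∅ := by
        ext j; simp [Finsupp.mem_support_iff, hall j]
      rw [hsupp]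
      simp
    have hzero : ∀ i, influence f i = 0 := by
      intro i
      rw [influence]
      have : ∀ x : Fin n → Bool,
          (if f x ≠ f (Function.update x i (!x i)) then (1:ℝ) else 0) = 0 := by
        intro x
        have hiff : (f x = true ↔ f (Function.update x i (!x i)) = true) := by
          rw [hP x, hP (Function.update x i (!x i))]
          rw [hconst x (Function.update x i (!x i))]
        have : f x = f (Function.update x i (!x i)) := by
          cases h1 : f x <;> cases h2 : f (Function.update x i (!x i)) <;>
            simp [h1, h2] at hiff ⊢
        rw [if_neg (by simp [this])]
      rw [Finset.sum_congr rfl fun x _ => this x]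
      simp
    have : avgSens f = 0 := by
      rw [avgSens]
      exact Finset.sum_eq_zero fun i _ => hzero i
    rw [this]
    have : ((1:ℝ) - (1/2:ℝ)^0) = 0 := by norm_num
    rw [this, Real.rpow_zero]
    norm_num
  | succ d ih =>
    intro n f hn hf
    obtain ⟨P, hdeg, hP⟩ := hf
    have hP' : ∀ x, (f x = true ↔ 0 ≤ eval (pmx x) P) := hP
    set N : ℝ := (2:ℝ)^n with hN
    have hNpos : (0:ℝ) < N := by positivity
    have hnR : (1:ℝ) ≤ (n:ℝ) := by exact_mod_cast hn
    have hnpos : (0:ℝ) < (n:ℝ) := by linarith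
    -- g j are degree-d PTFs
    have hgPTF : ∀ j, IsPTF d (gfun P j) := fun j =>
      ⟨dPoly P j, dPoly_totalDegree_le j hdeg, fun x => gfun_iff P j x⟩
    have hIH : ∀ j : Fin n, avgSens (gfun P j) ≤ 2 * (n:ℝ) ^ ((1:ℝ) - (1/2:ℝ)^d) :=
      fun j => ih (gfun P j) hn (hgPTF j)
    set H : (Fin n → Bool) → ℝ := fun x => ∑ i, pmOne (x i) * G P i x with hH
    -- step 1 : N * avgSens f = ∑_x F x * H x
    have h1 : N * avgSens f = ∑ x : Fin n → Bool, pmOne (f x) * H x := by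
      rw [avgSens, Finset.mul_sum]
      rw [show (∑ x : Fin n → Bool, pmOne (f x) * H x)
          = ∑ x : Fin n → Bool, ∑ i, pmOne (f x) * pmOne (x i) * G P i x by
        refine Finset.sum_congr rfl fun x _ => ?_
        rw [hH, Finset.mul_sum]
        exact Finset.sum_congr rfl fun i _ => by ring]
      rw [Finset.sum_comm]
      exact Finset.sum_congr rfl fun i _ => (sum_FG P f hP' i).symm
    -- step 2 : ∑ F H ≤ ∑ |H|
    have h2 : (∑ x : Fin n → Bool, pmOne (f x) * H x) ≤ ∑ x : Fin n → Bool, |H x| := by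
      refine Finset.sum_le_sum fun x _ => ?_
      calc pmOne (f x) * H x ≤ |pmOne (f x) * H x| := le_abs_self _
        _ = |H x| := by rw [abs_mul, abs_pmOne, one_mul]
    -- step 3 : Cauchy-Schwarz
    have h3 : (∑ x : Fin n → Bool, |H x|) ^ 2 ≤ N * ∑ x : Fin n → Bool, H x ^ 2 := by
      have := sq_sum_le_card_mul_sum_sq (s := (univ : Finset (Fin n → Bool))) (f := fun x => |H x|)
      have heq : ∑ x : Fin n → Bool, |H x| ^ 2 = ∑ x : Fin n → Bool, H x ^ 2 :=
        Finset.sum_congr rfl fun x _ => sq_abs _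
      calc (∑ x : Fin n → Bool, |H x|) ^ 2
          ≤ ((univ : Finset (Fin n → Bool)).card : ℝ) * ∑ x : Fin n → Bool, |H x| ^ 2 := this
        _ = N * ∑ x : Fin n → Bool, H x ^ 2 := by rw [heq, card_cube, hN]
    -- step 4 : expand ∑ H² and bound
    have h4 : (∑ x : Fin n → Bool, H x ^ 2)
        ≤ N * (n + ∑ j, avgSens (gfun P j)) := by
      have hexpand : (∑ x : Fin n → Bool, H x ^ 2)
          = ∑ i, ∑ j, ∑ x : Fin n → Bool,
              (pmOne (x i) * G P i x) * (pmOne (x j) * G P j x) := by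
        rw [show (∑ x : Fin n → Bool, H x ^ 2)
            = ∑ x : Fin n → Bool, ∑ i, ∑ j,
                (pmOne (x i) * G P i x) * (pmOne (x j) * G P j x) by
          refine Finset.sum_congr rfl fun x _ => ?_
          rw [sq, hH, Finset.sum_mul_sum]]
        rw [Finset.sum_comm]
        exact Finset.sum_congr rfl fun i _ => Finset.sum_comm
      rw [hexpand]
      have hdiag : ∀ i : Fin n,
          (∑ x : Fin n → Bool, (pmOne (x i) * G P i x) * (pmOne (x i) * G P i x)) = N := by
        intro i
        have : ∀ x : Fin n → Bool,
            (pmOne (x i) * G P i x) * (pmOne (x i) * G P i x) = 1 := by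
          intro x
          calc (pmOne (x i) * G P i x) * (pmOne (x i) * G P i x)
              = (pmOne (x i) * pmOne (x i)) * (G P i x * G P i x) := by ring
            _ = 1 := by rw [pmOne_mul_self, G, pmOne_mul_self, mul_one]
        rw [Finset.sum_congr rfl fun x _ => this x]
        rw [Finset.sum_const, card_univ]
        simp [hN]
      have hsplit : ∀ i : Fin n,
          (∑ j, ∑ x : Fin n → Bool, (pmOne (x i) * G P i x) * (pmOne (x j) * G P j x))
            = N + ∑ j ∈ univ.erase i, ∑ x : Fin n → Bool,
                (pmOne (x i) * G P i x) * (pmOne (x j) * G P j x) := by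
        intro i
        rw [← Finset.add_sum_erase _ _ (mem_univ i), hdiag i]
      calc (∑ i, ∑ j, ∑ x : Fin n → Bool, (pmOne (x i) * G P i x) * (pmOne (x j) * G P j x))
          = ∑ i : Fin n, (N + ∑ j ∈ univ.erase i, ∑ x : Fin n → Bool,
              (pmOne (x i) * G P i x) * (pmOne (x j) * G P j x)) :=
            Finset.sum_congr rfl fun i _ => hsplit i
        _ ≤ ∑ i : Fin n, (N + ∑ j ∈ univ.erase i, N * influence (gfun P j) i) := by
            refine Finset.sum_le_sum fun i _ => ?_
            refine add_le_add_right (Finset.sum_le_sum fun j hj => ?_) N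
            have hij : j ≠ i := Finset.ne_of_mem_erase hj
            exact (le_abs_self _).trans (cross_bound P i j hij)
        _ ≤ ∑ i : Fin n, (N + ∑ j, N * influence (gfun P j) i) := by
            refine Finset.sum_le_sum fun i _ => ?_
            refine add_le_add_right ?_ N
            refine Finset.sum_le_sum_of_subset_of_nonneg (Finset.erase_subset _ _)
              fun j _ _ => ?_
            exact mul_nonneg hNpos.le (influence_nonneg _ _)
        _ = N * n + N * ∑ j, avgSens (gfun P j) := by
            rw [Finset.sum_add_distrib, Finset.sum_const, card_univ]
            have : (∑ i : Fin n, ∑ j, N * influence (gfun P j) i)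
                = N * ∑ j, avgSens (gfun P j) := by
              rw [Finset.sum_comm, Finset.mul_sum]
              refine Finset.sum_congr rfl fun j _ => ?_
              rw [avgSens, Finset.mul_sum]
            rw [this]
            simp [mul_comm]
        _ = N * (n + ∑ j, avgSens (gfun P j)) := by ring
    -- combine: (avgSens f)² ≤ n + Σ avgSens g_j
    have hAS0 : 0 ≤ avgSens f := avgSens_nonneg f
    have hsumH_nonneg : 0 ≤ ∑ x : Fin n → Bool, |H x| :=
      Finset.sum_nonneg fun x _ => abs_nonneg _
    have hkey : (avgSens f) ^ 2 ≤ n + ∑ j, avgSens (gfun P j) := by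
      have hA : avgSens f ≤ (1/N) * ∑ x : Fin n → Bool, |H x| := by
        rw [show avgSens f = (1/N) * (N * avgSens f) by field_simp, h1]
        exact mul_le_mul_of_nonneg_left h2 (by positivity)
      have hA2 : (avgSens f)^2 ≤ ((1/N) * ∑ x : Fin n → Bool, |H x|)^2 := by
        exact pow_le_pow_left₀ hAS0 hA 2
      calc (avgSens f)^2 ≤ ((1/N) * ∑ x : Fin n → Bool, |H x|)^2 := hA2
        _ = (1/N)^2 * (∑ x : Fin n → Bool, |H x|)^2 := by ring
        _ ≤ (1/N)^2 * (N * ∑ x : Fin n → Bool, H x ^ 2) := by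
            exact mul_le_mul_of_nonneg_left h3 (by positivity)
        _ ≤ (1/N)^2 * (N * (N * (n + ∑ j, avgSens (gfun P j)))) := by
            refine mul_le_mul_of_nonneg_left ?_ (by positivity)
            exact mul_le_mul_of_nonneg_left h4 hNpos.le
        _ = n + ∑ j, avgSens (gfun P j) := by field_simp
    -- final arithmetic
    set Ed : ℝ := (1:ℝ) - (1/2:ℝ)^d with hEd
    have hsum_g : (∑ j, avgSens (gfun P j)) ≤ (n:ℝ) * (2 * (n:ℝ) ^ Ed) := by
      calc (∑ j, avgSens (gfun P j)) ≤ ∑ _j : Fin n, 2 * (n:ℝ) ^ Ed :=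
            Finset.sum_le_sum fun j _ => hIH j
        _ = (n:ℝ) * (2 * (n:ℝ) ^ Ed) := by rw [Finset.sum_const, card_univ]; simp
    have hmul : (n:ℝ) * (n:ℝ) ^ Ed = (n:ℝ) ^ ((2:ℝ) - (1/2:ℝ)^d) := by
      rw [show ((2:ℝ) - (1/2:ℝ)^d) = 1 + Ed by rw [hEd]; ring]
      rw [Real.rpow_add hnpos, Real.rpow_one]
    have hfloor : (n:ℝ) ≤ (n:ℝ) ^ ((2:ℝ) - (1/2:ℝ)^d) := by
      have h12 : ((1/2:ℝ))^d ≤ 1 := by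
        apply pow_le_one₀ <;> norm_num
      calc (n:ℝ) = (n:ℝ) ^ (1:ℝ) := by rw [Real.rpow_one]
        _ ≤ (n:ℝ) ^ ((2:ℝ) - (1/2:ℝ)^d) := by
            apply Real.rpow_le_rpow_of_exponent_le hnR
            linarith
    have h5 : (n:ℝ) ^ ((1:ℝ) - (1/2:ℝ)^(d+1)) * (n:ℝ) ^ ((1:ℝ) - (1/2:ℝ)^(d+1))
        = (n:ℝ) ^ ((2:ℝ) - (1/2:ℝ)^d) := by
      rw [← Real.rpow_add hnpos]
      congr 1
      rw [pow_succ]; ring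
    have htarget : (2 * (n:ℝ) ^ ((1:ℝ) - (1/2:ℝ)^(d+1))) ^ 2
        = 4 * (n:ℝ) ^ ((2:ℝ) - (1/2:ℝ)^d) := by
      calc (2 * (n:ℝ) ^ ((1:ℝ) - (1/2:ℝ)^(d+1))) ^ 2
          = 4 * ((n:ℝ) ^ ((1:ℝ) - (1/2:ℝ)^(d+1)) * (n:ℝ) ^ ((1:ℝ) - (1/2:ℝ)^(d+1))) := by ring
        _ = 4 * (n:ℝ) ^ ((2:ℝ) - (1/2:ℝ)^d) := by rw [h5]
    have hfin : (avgSens f)^2 ≤ (2 * (n:ℝ) ^ ((1:ℝ) - (1/2:ℝ)^(d+1))) ^ 2 := by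
      rw [htarget]
      calc (avgSens f)^2 ≤ n + ∑ j, avgSens (gfun P j) := hkey
        _ ≤ (n:ℝ) + (n:ℝ) * (2 * (n:ℝ) ^ Ed) := by linarith
        _ = (n:ℝ) + 2 * ((n:ℝ) * (n:ℝ) ^ Ed) := by ring
        _ = (n:ℝ) + 2 * (n:ℝ) ^ ((2:ℝ) - (1/2:ℝ)^d) := by rw [hmul]
        _ ≤ 4 * (n:ℝ) ^ ((2:ℝ) - (1/2:ℝ)^d) := by linarith
    have htgt0 : 0 ≤ 2 * (n:ℝ) ^ ((1:ℝ) - (1/2:ℝ)^(d+1)) := by positivity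
    exact le_of_pow_le_pow_left₀ two_ne_zero htgt0 hfin


end AuxAS

/-- Theorem 7.2: every degree-`d` PTF `f` on `{-1,1}^n` satisfies
`AS(f) ≤ 3 · n^{1 - 2^{-d}}`. -/
theorem combinatorial_average_sensitivity (n d : ℕ) (hn : 1 ≤ n) (hd : 1 ≤ d)
    (f : (Fin n → Bool) → Bool) (hf : IsPTF d f) :
    avgSens f ≤ 3 * (n : ℝ) ^ ((1 : ℝ) - (1 / 2 : ℝ) ^ d) := by
  have h := AuxAS.main_bound d f hn hf
  have h0 : (0:ℝ) ≤ (n : ℝ) ^ ((1 : ℝ) - (1 / 2 : ℝ) ^ d) :=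
    Real.rpow_nonneg (Nat.cast_nonneg n) _
  linarith

end
end

section
/- For every integer d ≥ 1 there is a constant c_d such that the following holds. Let P be a real polynomial on R^n of total degree at most d with E_{X ~ N(0,1)^n}[P(X)²] = 1, let δ ∈ (0,1), let X and Y be independent standard Gaussian vectors on R^n, and let Z = (1-δ)·X + √(2δ-δ²)·Y. Then the perturbation polynomial Q(X,Y) = P(Z) − P(X) satisfies E[Q(X,Y)²] ≤ c_d² · δ. -/
open Finset MeasureTheory ProbabilityTheory
open scoped Classical

noncomputable section

section
open Filter
open scoped NNReal ENNReal

namespace PNS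

/-- canonical 1D gaussian -/
def gam : Measure ℝ := gaussianReal 0 1

instance : IsProbabilityMeasure gam := by unfold gam; infer_instance

lemma ipow (k : ℕ) : Integrable (fun x : ℝ => x ^ k * Real.exp (-(x ^ 2) / 2)) := by
  have h := integrable_rpow_mul_exp_neg_mul_sq (b := (1:ℝ)/2) (by norm_num)
    (s := (k : ℝ)) (by exact lt_of_lt_of_le (by norm_num) (Nat.cast_nonneg k))
  have : (fun x : ℝ => x ^ (k:ℝ) * Real.exp (-(1/2) * x ^ 2))
      = fun x : ℝ => x ^ k * Real.exp (-(x ^ 2) / 2) := by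
    funext x
    rw [Real.rpow_natCast]
    ring_nf
  rwa [this] at h

lemma pdf_eq (x : ℝ) :
    gaussianPDFReal 0 1 x = (Real.sqrt (2 * Real.pi))⁻¹ * Real.exp (-(x ^ 2) / 2) := by
  simp [gaussianPDFReal]

lemma integral_gam (g : ℝ → ℝ) :
    ∫ x, g x ∂gam = ∫ x, gaussianPDFReal 0 1 x * g x := by
  unfold gam
  rw [gaussianReal_of_var_ne_zero 0 one_ne_zero]
  have hmeas : Measurable fun x => Real.toNNReal (gaussianPDFReal 0 1 x) :=
    (measurable_gaussianPDFReal 0 1).real_toNNReal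
  have : (gaussianPDF 0 1) = fun x => ((Real.toNNReal (gaussianPDFReal 0 1 x) : ℝ≥0) : ℝ≥0∞) :=
    rfl
  rw [this, integral_withDensity_eq_integral_smul hmeas]
  congr 1
  funext x
  rw [NNReal.smul_def, Real.coe_toNNReal _ (gaussianPDFReal_nonneg 0 1 x), smul_eq_mul]

lemma integrable_gam_iff (g : ℝ → ℝ) :
    Integrable g gam ↔ Integrable (fun x => gaussianPDFReal 0 1 x * g x) := by
  unfold gam
  rw [gaussianReal_of_var_ne_zero 0 one_ne_zero]
  have hmeas : Measurable fun x => Real.toNNReal (gaussianPDFReal 0 1 x) :=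
    (measurable_gaussianPDFReal 0 1).real_toNNReal
  have h0 : (gaussianPDF 0 1) = fun x => ((Real.toNNReal (gaussianPDFReal 0 1 x) : ℝ≥0) : ℝ≥0∞) :=
    rfl
  rw [h0, integrable_withDensity_iff_integrable_smul hmeas]
  constructor <;> intro h <;> refine h.congr (Eventually.of_forall fun x => ?_) <;>
    simp only [NNReal.smul_def, Real.coe_toNNReal _ (gaussianPDFReal_nonneg 0 1 x), smul_eq_mul]

lemma integrable_pow_gam (k : ℕ) : Integrable (fun x : ℝ => x ^ k) gam := by
  rw [integrable_gam_iff]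
  have h := (ipow k).const_mul (Real.sqrt (2 * Real.pi))⁻¹
  refine h.congr (Eventually.of_forall fun x => ?_)
  simp only [pdf_eq]; ring

/-- the k-th gaussian moment -/
def gm (k : ℕ) : ℝ := ∫ x, x ^ k ∂gam

/-- auxiliary unnormalized moments -/
def E (k : ℕ) : ℝ := ∫ x : ℝ, x ^ k * Real.exp (-(x ^ 2) / 2)

lemma gm_eq (k : ℕ) : gm k = (Real.sqrt (2 * Real.pi))⁻¹ * E k := by
  unfold gm E
  rw [integral_gam, ← integral_const_mul]
  congr 1; funext x; rw [pdf_eq]; ring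

lemma gm_zero : gm 0 = 1 := by
  unfold gm
  simp

lemma E_one : E 1 = 0 := by
  unfold E
  have hderiv : ∀ x : ℝ, HasDerivAt (fun x : ℝ => -Real.exp (-(x ^ 2) / 2))
      (x ^ 1 * Real.exp (-(x ^ 2) / 2)) x := by
    intro x
    have h1 : HasDerivAt (fun x : ℝ => -(x ^ 2) / 2) (-x) x := by
      have := ((hasDerivAt_pow 2 x).neg).div_const 2
      simpa using this.congr_deriv (by ring)
    have := (h1.exp).neg
    convert this using 1 <;> first | rfl | (funext y; simp) | ring
  have h2 : Tendsto (fun x : ℝ => x ^ 2) atTop atTop := tendsto_pow_atTop two_ne_zero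
  have h2b : Tendsto (fun x : ℝ => x ^ 2) atBot atTop :=
    (h2.comp tendsto_neg_atBot_atTop).congr fun x => by simp
  have htop : Tendsto (fun x : ℝ => -Real.exp (-(x ^ 2) / 2)) atTop (nhds 0) := by
    rw [← neg_zero]
    refine Tendsto.neg ?_
    refine Real.tendsto_exp_atBot.comp ?_
    exact (tendsto_neg_atTop_atBot.comp h2).atBot_div_const (by norm_num)
  have hbot : Tendsto (fun x : ℝ => -Real.exp (-(x ^ 2) / 2)) atBot (nhds 0) := by
    rw [← neg_zero]
    refine Tendsto.neg ?_
    refine Real.tendsto_exp_atBot.comp ?_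
    exact (tendsto_neg_atTop_atBot.comp h2b).atBot_div_const (by norm_num)
  have := integral_of_hasDerivAt_of_tendsto hderiv (ipow 1) hbot htop
  simpa using this

lemma E_rec (k : ℕ) : E (k + 2) = (k + 1) * E k := by
  unfold E
  have hu : ∀ x : ℝ, HasDerivAt (fun x : ℝ => x ^ (k + 1))
      (((k : ℝ) + 1) * x ^ k) x := by
    intro x
    simpa using (hasDerivAt_pow (k+1) x).congr_deriv (by push_cast; ring)
  have hv : ∀ x : ℝ, HasDerivAt (fun x : ℝ => -Real.exp (-(x ^ 2) / 2))
      (x * Real.exp (-(x ^ 2) / 2)) x := by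
    intro x
    have h1 : HasDerivAt (fun x : ℝ => -(x ^ 2) / 2) (-x) x := by
      have := ((hasDerivAt_pow 2 x).neg).div_const 2
      simpa using this.congr_deriv (by ring)
    have := (h1.exp).neg
    convert this using 1 <;> first | rfl | (funext y; simp) | ring
  have huv' : Integrable ((fun x : ℝ => x ^ (k+1)) * fun x => x * Real.exp (-(x ^ 2) / 2)) := by
    refine (ipow (k+2)).congr (Eventually.of_forall fun x => ?_)
    simp only [Pi.mul_apply]; ring
  have hu'v : Integrable ((fun x : ℝ => ((k : ℝ) + 1) * x ^ k) *
      fun x => -Real.exp (-(x ^ 2) / 2)) := by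
    refine (((ipow k).const_mul (-((k:ℝ)+1))).congr (Eventually.of_forall fun x => ?_))
    simp only [Pi.mul_apply]; ring
  have huv : Integrable ((fun x : ℝ => x ^ (k+1)) * fun x => -Real.exp (-(x ^ 2) / 2)) := by
    refine ((ipow (k+1)).neg.congr (Eventually.of_forall fun x => ?_))
    simp only [Pi.mul_apply, Pi.neg_apply]; ring
  have h := integral_mul_deriv_eq_deriv_mul_of_integrable (fun x _ => hu x) (fun x _ => hv x) huv' hu'v huv
  have hL : ∫ x : ℝ, x ^ (k+1) * (x * Real.exp (-(x ^ 2) / 2))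
      = ∫ x : ℝ, x ^ (k + 2) * Real.exp (-(x ^ 2) / 2) := by
    congr 1; funext x; ring
  have hR : - ∫ x : ℝ, ((k : ℝ) + 1) * x ^ k * (-Real.exp (-(x ^ 2) / 2))
      = ((k : ℝ) + 1) * ∫ x : ℝ, x ^ k * Real.exp (-(x ^ 2) / 2) := by
    rw [← integral_neg, ← integral_const_mul]
    congr 1; funext x; ring
  rw [hL] at h
  rw [h, ← hR]

lemma gm_rec (k : ℕ) : gm (k + 2) = ((k : ℝ) + 1) * gm k := by
  rw [gm_eq, gm_eq, E_rec]; ring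

lemma gm_one : gm 1 = 0 := by rw [gm_eq, E_one, mul_zero]

lemma gm_odd : ∀ k, Odd k → gm k = 0 := by
  intro k
  induction k using Nat.strong_induction_on with
  | _ k ih =>
    intro hk
    match k with
    | 0 => exact absurd hk (by simp)
    | 1 => exact gm_one
    | (j+2) =>
      have hj : Odd j := by rcases hk with ⟨t, ht⟩; exact ⟨t - 1, by omega⟩
      rw [gm_rec, ih j (by omega) hj, mul_zero]

variable (m : ℕ → ℝ)

/-- abstract binomial convolution -/
def F (ρ s : ℝ) (k : ℕ) : ℝ :=
  ∑ j ∈ range (k + 1), (Nat.choose k j : ℝ) * ρ ^ j * s ^ (k - j) * (m j * m (k - j))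

lemma F_step (hm1 : m 1 = 0) (hrec : ∀ k, m (k + 2) = ((k : ℝ) + 1) * m k)
    (ρ s : ℝ) (k : ℕ) :
    F m ρ s (k + 2) = ((k : ℝ) + 1) * (ρ ^ 2 + s ^ 2) * F m ρ s k := by
  set X : ℕ → ℝ := fun j => ρ ^ j * s ^ (k + 2 - j) * (m j * m (k + 2 - j)) with hX
  have hA : ∑ j ∈ range (k + 2), (Nat.choose (k+1) j : ℝ) * X j
      = ((k : ℝ) + 1) * s ^ 2 * F m ρ s k := by
    rw [Finset.sum_range_succ]
    have hlast : (Nat.choose (k+1) (k+1) : ℝ) * X (k+1) = 0 := by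
      have : k + 2 - (k+1) = 1 := by omega
      simp [hX, this, hm1]
    rw [hlast, add_zero]
    unfold F
    rw [Finset.mul_sum]
    refine Finset.sum_congr rfl fun j hj => ?_
    have hjk : j ≤ k := by simpa using Nat.lt_succ_iff.mp (Finset.mem_range.mp hj)
    have h1 : k + 2 - j = (k - j) + 2 := by omega
    have h2 : m (k + 2 - j) = ((k - j : ℕ) + 1 : ℝ) * m (k - j) := by
      rw [h1, hrec]
    have hchoose : (Nat.choose (k+1) j : ℝ) * ((k - j : ℕ) + 1 : ℝ)
        = ((k : ℝ) + 1) * (Nat.choose k j : ℝ) := by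
      have hnat : Nat.choose (k+1) j * (k + 1 - j) = (k + 1) * Nat.choose k j := by
        have e1 : Nat.choose (k+1) (j+1) * (j+1) = Nat.choose (k+1) j * (k + 1 - j) :=
          Nat.choose_succ_right_eq (k+1) j
        have e2 : (k+1) * Nat.choose k j = Nat.choose (k+1) (j+1) * (j+1) :=
          Nat.add_one_mul_choose_eq k j
        omega
      have : ((Nat.choose (k+1) j * (k + 1 - j) : ℕ) : ℝ)
          = (((k + 1) * Nat.choose k j : ℕ) : ℝ) := by exact_mod_cast hnat
      push_cast at this
      have hsub : ((k + 1 - j : ℕ) : ℝ) = (k : ℝ) + 1 - (j : ℝ) := by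
        push_cast [Nat.cast_sub (by omega : j ≤ k + 1)]; ring
      rw [hsub] at this
      have hsub2 : ((k - j : ℕ) : ℝ) = (k : ℝ) - (j : ℝ) := by
        push_cast [Nat.cast_sub hjk]; ring
      rw [hsub2]
      nlinarith [this]
    have hs : s ^ (k + 2 - j) = s ^ 2 * s ^ (k - j) := by
      rw [h1, pow_add]; ring
    simp only [hX]
    rw [h2, hs]
    linear_combination (ρ ^ j * s ^ 2 * s ^ (k - j) * m j * m (k - j)) * hchoose
  have hB : ∑ j ∈ range (k + 2), (Nat.choose (k+1) j : ℝ)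
        * (ρ ^ (j+1) * s ^ (k + 1 - j) * (m (j+1) * m (k + 1 - j)))
      = ((k : ℝ) + 1) * ρ ^ 2 * F m ρ s k := by
    rw [Finset.sum_range_succ']
    have hfirst : (Nat.choose (k+1) 0 : ℝ)
        * (ρ ^ (0+1) * s ^ (k + 1 - 0) * (m (0+1) * m (k + 1 - 0))) = 0 := by
      simp [hm1]
    rw [hfirst, add_zero]
    unfold F
    rw [Finset.mul_sum]
    refine Finset.sum_congr rfl fun t ht => ?_
    have htk : t ≤ k := by simpa using Nat.lt_succ_iff.mp (Finset.mem_range.mp ht)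
    have h1 : k + 1 - (t + 1) = k - t := by omega
    have h2 : m (t + 1 + 1) = ((t : ℝ) + 1) * m t := hrec t
    have hchoose : (Nat.choose (k+1) (t+1) : ℝ) * ((t : ℝ) + 1)
        = ((k : ℝ) + 1) * (Nat.choose k t : ℝ) := by
      have e2 : (k+1) * Nat.choose k t = Nat.choose (k+1) (t+1) * (t+1) :=
        Nat.add_one_mul_choose_eq k t
      have : (((k+1) * Nat.choose k t : ℕ) : ℝ) = ((Nat.choose (k+1) (t+1) * (t+1) : ℕ) : ℝ) :=
        by exact_mod_cast e2
      push_cast at this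
      linarith
    rw [h1, h2]
    have : ρ ^ (t + 1 + 1) = ρ ^ 2 * ρ ^ t := by ring
    rw [this]
    linear_combination (ρ ^ 2 * ρ ^ t * s ^ (k - t) * m t * m (k - t)) * hchoose
  have hsplit : F m ρ s (k + 2)
      = (∑ j ∈ range (k + 2), (Nat.choose (k+1) j : ℝ) * X j)
      + ∑ j ∈ range (k + 2), (Nat.choose (k+1) j : ℝ)
          * (ρ ^ (j+1) * s ^ (k + 1 - j) * (m (j+1) * m (k + 1 - j))) := by
    unfold F
    have hL : ∑ j ∈ range (k + 3), (Nat.choose (k+2) j : ℝ) * ρ ^ j * s ^ (k + 2 - j)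
          * (m j * m (k + 2 - j))
        = (∑ t ∈ range (k + 2), (Nat.choose (k+2) (t+1) : ℝ) * X (t+1)) + X 0 := by
      rw [Finset.sum_range_succ']
      congr 1
      · refine Finset.sum_congr rfl fun t _ => ?_
        simp only [hX]; ring
      · simp [hX]
    rw [hL]
    have hP : ∀ t, (Nat.choose (k+2) (t+1) : ℝ) = (Nat.choose (k+1) t : ℝ)
        + (Nat.choose (k+1) (t+1) : ℝ) := by
      intro t
      rw [← Nat.cast_add, ← Nat.choose_succ_succ]
    have : ∑ t ∈ range (k + 2), (Nat.choose (k+2) (t+1) : ℝ) * X (t+1)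
        = (∑ t ∈ range (k + 2), (Nat.choose (k+1) t : ℝ)
            * (ρ ^ (t+1) * s ^ (k + 1 - t) * (m (t+1) * m (k + 1 - t))))
          + ∑ t ∈ range (k + 2), (Nat.choose (k+1) (t+1) : ℝ) * X (t+1) := by
      rw [← Finset.sum_add_distrib]
      refine Finset.sum_congr rfl fun t ht => ?_
      have htk : t < k + 2 := Finset.mem_range.mp ht
      have h1 : k + 2 - (t+1) = k + 1 - t := by omega
      rw [hP t]
      simp only [hX, h1]
      ring
    rw [this]
    have h3 : ∑ j ∈ range (k + 3), (Nat.choose (k+1) j : ℝ) * X j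
        = ∑ j ∈ range (k + 2), (Nat.choose (k+1) j : ℝ) * X j := by
      rw [Finset.sum_range_succ]
      simp [Nat.choose_eq_zero_of_lt (by omega : k + 1 < k + 2)]
    have hA2 : ∑ j ∈ range (k + 2), (Nat.choose (k+1) j : ℝ) * X j
        = (∑ t ∈ range (k + 2), (Nat.choose (k+1) (t+1) : ℝ) * X (t+1))
          + (Nat.choose (k+1) 0 : ℝ) * X 0 := by
      rw [← h3]
      exact Finset.sum_range_succ' (fun j => (Nat.choose (k+1) j : ℝ) * X j) (k+2)
    have hX0 : (Nat.choose (k+1) 0 : ℝ) * X 0 = X 0 := by simp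
    rw [hX0] at hA2
    linarith [hA2]
  rw [hsplit, hA, hB]
  ring

lemma F_conv (hm0 : m 0 = 1) (hm1 : m 1 = 0)
    (hrec : ∀ k, m (k + 2) = ((k : ℝ) + 1) * m k)
    (ρ s : ℝ) (h : ρ ^ 2 + s ^ 2 = 1) : ∀ k, F m ρ s k = m k := by
  intro k
  induction k using Nat.strong_induction_on with
  | _ k ih =>
    match k with
    | 0 => simp [F, hm0]
    | 1 => norm_num [F, Finset.sum_range_succ, hm0, hm1]
    | (j+2) =>
      rw [F_step m hm1 hrec, h, mul_one, ih j (by omega), hrec]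


/-! ### Section 3: two-variable integrals and pi factorization -/

lemma integrable_monomial2 (a b : ℕ) :
    Integrable (fun p : ℝ × ℝ => p.1 ^ a * p.2 ^ b) (gam.prod gam) :=
  (integrable_pow_gam a).mul_prod (integrable_pow_gam b)

lemma expand2 (a b : ℕ) (ρ s : ℝ) (p : ℝ × ℝ) :
    p.1 ^ a * (ρ * p.1 + s * p.2) ^ b
      = ∑ j ∈ range (b + 1),
          ((Nat.choose b j : ℝ) * ρ ^ j * s ^ (b - j)) * (p.1 ^ (a + j) * p.2 ^ (b - j)) := by
  rw [add_pow, Finset.mul_sum]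
  refine Finset.sum_congr rfl fun j hj => ?_
  rw [mul_pow, mul_pow, pow_add]
  ring

lemma integrable2 (a b : ℕ) (ρ s : ℝ) :
    Integrable (fun p : ℝ × ℝ => p.1 ^ a * (ρ * p.1 + s * p.2) ^ b) (gam.prod gam) := by
  have : (fun p : ℝ × ℝ => p.1 ^ a * (ρ * p.1 + s * p.2) ^ b)
      = fun p : ℝ × ℝ => ∑ j ∈ range (b + 1),
          ((Nat.choose b j : ℝ) * ρ ^ j * s ^ (b - j)) * (p.1 ^ (a + j) * p.2 ^ (b - j)) := by
    funext p; exact expand2 a b ρ s p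
  rw [this]
  exact integrable_finset_sum _ fun j _ => (integrable_monomial2 (a + j) (b - j)).const_mul _

/-- the basic two-variable moment -/
def g2 (a b : ℕ) (ρ s : ℝ) : ℝ :=
  ∫ p : ℝ × ℝ, p.1 ^ a * (ρ * p.1 + s * p.2) ^ b ∂(gam.prod gam)

lemma g2_eq (a b : ℕ) (ρ s : ℝ) :
    g2 a b ρ s = ∑ j ∈ range (b + 1),
      (Nat.choose b j : ℝ) * ρ ^ j * s ^ (b - j) * (gm (a + j) * gm (b - j)) := by
  unfold g2
  have h1 : (fun p : ℝ × ℝ => p.1 ^ a * (ρ * p.1 + s * p.2) ^ b)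
      = fun p : ℝ × ℝ => ∑ j ∈ range (b + 1),
          ((Nat.choose b j : ℝ) * ρ ^ j * s ^ (b - j)) * (p.1 ^ (a + j) * p.2 ^ (b - j)) := by
    funext p; exact expand2 a b ρ s p
  rw [h1, integral_finset_sum _ fun j _ => (integrable_monomial2 (a + j) (b - j)).const_mul _]
  refine Finset.sum_congr rfl fun j hj => ?_
  rw [integral_const_mul]
  unfold gm
  rw [integral_prod_mul (fun u : ℝ => u ^ (a + j)) (fun v : ℝ => v ^ (b - j))]

lemma g2_right (b : ℕ) (ρ s : ℝ) (h : ρ ^ 2 + s ^ 2 = 1) : g2 0 b ρ s = gm b := by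
  rw [g2_eq]
  have := F_conv gm gm_zero gm_one gm_rec ρ s h b
  unfold F at this
  rw [← this]
  exact Finset.sum_congr rfl fun j _ => by rw [zero_add]

lemma g2_left (a : ℕ) (ρ s : ℝ) : g2 a 0 ρ s = gm a := by
  rw [g2_eq]
  simp [gm_zero]

/-- pi-factorization : integrability -/
lemma integrable_pi_prod {E : Type*} [MeasurableSpace E] (μ : Measure E) [SigmaFinite μ]
    {n : ℕ} (f : Fin n → E → ℝ) (hf : ∀ i, Integrable (f i) μ) :
    Integrable (fun x : Fin n → E => ∏ i, f i (x i)) (Measure.pi fun _ => μ) := by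
  induction n with
  | zero =>
    simp only [Finset.univ_eq_empty, Finset.prod_empty, integrable_const_iff,
      Measure.pi_empty_univ, ENNReal.one_lt_top, or_true, one_ne_zero]
    exact Or.inr ⟨by simp [Measure.pi_empty_univ]⟩
  | succ n ih =>
    have h := (measurePreserving_piFinSuccAbove (fun _ : Fin (n+1) => μ) 0).symm
    rw [← h.integrable_comp_emb (MeasurableEquiv.measurableEmbedding _)]
    simp_rw [MeasurableEquiv.piFinSuccAbove_symm_apply, Fin.insertNthEquiv,
      Fin.prod_univ_succ, Fin.insertNth_zero]
    simp only [Fin.zero_succAbove, cast_eq, Function.comp_def, Fin.cons_zero, Fin.cons_succ,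
      Equiv.coe_fn_mk]
    exact Integrable.mul_prod (hf 0) (ih (fun j => f (Fin.succ j)) (fun j => hf _))

/-- pi-factorization : integral -/
lemma integral_pi_prod {E : Type*} [MeasurableSpace E] (μ : Measure E) [SigmaFinite μ]
    [IsProbabilityMeasure μ] {n : ℕ} (f : Fin n → E → ℝ) :
    ∫ x : Fin n → E, ∏ i, f i (x i) ∂(Measure.pi fun _ => μ) = ∏ i, ∫ x, f i x ∂μ := by
  induction n with
  | zero =>
    simp only [Finset.univ_eq_empty, Finset.prod_empty, integral_const,
      Measure.pi_empty_univ, ENNReal.toReal_one, smul_eq_mul, mul_one, one_smul]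
    simp [Measure.real, Measure.pi_empty_univ]
  | succ n ih =>
    calc
      _ = ∫ x : E × (Fin n → E),
          f 0 x.1 * ∏ i : Fin n, f (Fin.succ i) (x.2 i) ∂(μ.prod (Measure.pi fun _ => μ)) := by
        rw [← ((measurePreserving_piFinSuccAbove
          (fun _ : Fin (n+1) => μ) 0).symm).integral_comp']
        simp [MeasurableEquiv.piFinSuccAbove_symm_apply, Fin.insertNthEquiv,
          Fin.prod_univ_succ, Fin.insertNth_zero, Fin.zero_succAbove]
      _ = (∫ x, f 0 x ∂μ) * ∏ i : Fin n, ∫ x, f (Fin.succ i) x ∂μ := by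
        rw [← ih (fun j => f (Fin.succ j)), ← integral_prod_mul]
      _ = ∏ i, ∫ x, f i x ∂μ := by rw [Fin.prod_univ_succ]


/-! ### Section 4: n-dimensional product structure -/

variable {n : ℕ}

lemma gaussn_eq : gaussn n = Measure.pi fun _ => gam := rfl

instance : IsProbabilityMeasure (gaussn n) := by
  rw [gaussn_eq]; infer_instance

/-- transfer from the pair of pi-measures to the pi of pair-measures -/
lemma prod_pi_transfer (h : Fin n → (ℝ × ℝ) → ℝ) :
    (∫ p : (Fin n → ℝ) × (Fin n → ℝ), ∏ i, h i (p.1 i, p.2 i)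
      ∂((gaussn n).prod (gaussn n)))
    = ∫ w : Fin n → ℝ × ℝ, ∏ i, h i (w i) ∂(Measure.pi fun _ => gam.prod gam) := by
  have hmp := measurePreserving_arrowProdEquivProdArrow ℝ ℝ (Fin n)
    (fun _ => gam) (fun _ => gam)
  rw [gaussn_eq, ← hmp.integral_comp']
  congr 1

lemma prod_pi_transfer_integrable (h : Fin n → (ℝ × ℝ) → ℝ)
    (hi : ∀ i, Integrable (h i) (gam.prod gam)) :
    Integrable (fun p : (Fin n → ℝ) × (Fin n → ℝ) => ∏ i, h i (p.1 i, p.2 i))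
      ((gaussn n).prod (gaussn n)) := by
  have hmp := measurePreserving_arrowProdEquivProdArrow ℝ ℝ (Fin n)
    (fun _ => gam) (fun _ => gam)
  rw [gaussn_eq, ← hmp.integrable_comp_emb (MeasurableEquiv.measurableEmbedding _)]
  have : ((fun p : (Fin n → ℝ) × (Fin n → ℝ) => ∏ i, h i (p.1 i, p.2 i)) ∘
      (MeasurableEquiv.arrowProdEquivProdArrow ℝ ℝ (Fin n)))
      = fun w : Fin n → ℝ × ℝ => ∏ i, h i (w i) := by
    funext w
    simp [MeasurableEquiv.arrowProdEquivProdArrow, Equiv.arrowProdEquivProdArrow]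
  rw [this]
  exact integrable_pi_prod _ _ hi

/-- the basic monomial-pair function -/
def hfun (ρ s : ℝ) (a b : Fin n → ℕ) : (Fin n → ℝ) × (Fin n → ℝ) → ℝ :=
  fun p => ∏ i, (p.1 i ^ a i * (ρ * p.1 i + s * p.2 i) ^ b i)

lemma hfun_integrable (ρ s : ℝ) (a b : Fin n → ℕ) :
    Integrable (hfun ρ s a b) ((gaussn n).prod (gaussn n)) :=
  prod_pi_transfer_integrable (fun i => fun q : ℝ × ℝ => q.1 ^ a i * (ρ * q.1 + s * q.2) ^ b i)
    (fun i => integrable2 (a i) (b i) ρ s)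

lemma hfun_integral (ρ s : ℝ) (a b : Fin n → ℕ) :
    ∫ p, hfun ρ s a b p ∂((gaussn n).prod (gaussn n)) = ∏ i, g2 (a i) (b i) ρ s := by
  unfold hfun
  rw [prod_pi_transfer (fun i => fun q : ℝ × ℝ => q.1 ^ a i * (ρ * q.1 + s * q.2) ^ b i)]
  exact integral_pi_prod (gam.prod gam)
    (fun i => fun q : ℝ × ℝ => q.1 ^ a i * (ρ * q.1 + s * q.2) ^ b i)


/-! ### Section 5: expansion of the polynomial integrals -/

variable (P : MvPolynomial (Fin n) ℝ)

/-- abbreviation for the noisy point -/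
def zpt (ρ s : ℝ) (p : (Fin n → ℝ) × (Fin n → ℝ)) : Fin n → ℝ :=
  fun i => ρ * p.1 i + s * p.2 i

lemma expand_xz (ρ s : ℝ) (p : (Fin n → ℝ) × (Fin n → ℝ)) :
    (MvPolynomial.eval p.1 P) * (MvPolynomial.eval (zpt ρ s p) P)
      = ∑ α ∈ P.support, ∑ β ∈ P.support,
          (MvPolynomial.coeff α P * MvPolynomial.coeff β P) * hfun ρ s α β p := by
  rw [MvPolynomial.eval_eq', MvPolynomial.eval_eq', Finset.sum_mul_sum]
  refine Finset.sum_congr rfl fun α _ => Finset.sum_congr rfl fun β _ => ?_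
  simp only [hfun, zpt]
  rw [Finset.prod_mul_distrib]
  ring

lemma expand_xx (ρ s : ℝ) (p : (Fin n → ℝ) × (Fin n → ℝ)) :
    (MvPolynomial.eval p.1 P) * (MvPolynomial.eval p.1 P)
      = ∑ α ∈ P.support, ∑ β ∈ P.support,
          (MvPolynomial.coeff α P * MvPolynomial.coeff β P)
            * hfun ρ s (fun i => α i + β i) (fun _ => 0) p := by
  rw [MvPolynomial.eval_eq', Finset.sum_mul_sum]
  refine Finset.sum_congr rfl fun α _ => Finset.sum_congr rfl fun β _ => ?_
  simp only [hfun, pow_zero, mul_one, pow_add]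
  rw [Finset.prod_mul_distrib]
  ring

lemma expand_zz (ρ s : ℝ) (p : (Fin n → ℝ) × (Fin n → ℝ)) :
    (MvPolynomial.eval (zpt ρ s p) P) * (MvPolynomial.eval (zpt ρ s p) P)
      = ∑ α ∈ P.support, ∑ β ∈ P.support,
          (MvPolynomial.coeff α P * MvPolynomial.coeff β P)
            * hfun ρ s (fun _ => 0) (fun i => α i + β i) p := by
  rw [MvPolynomial.eval_eq', Finset.sum_mul_sum]
  refine Finset.sum_congr rfl fun α _ => Finset.sum_congr rfl fun β _ => ?_
  simp only [hfun, zpt, pow_zero, one_mul, pow_add]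
  rw [Finset.prod_mul_distrib]
  ring

lemma integrable_xz (ρ s : ℝ) :
    Integrable (fun p : (Fin n → ℝ) × (Fin n → ℝ) =>
        (MvPolynomial.eval p.1 P) * (MvPolynomial.eval (zpt ρ s p) P))
      ((gaussn n).prod (gaussn n)) := by
  have h1 : (fun p : (Fin n → ℝ) × (Fin n → ℝ) =>
        (MvPolynomial.eval p.1 P) * (MvPolynomial.eval (zpt ρ s p) P))
      = fun p => ∑ α ∈ P.support, ∑ β ∈ P.support,
          (MvPolynomial.coeff α P * MvPolynomial.coeff β P) * hfun ρ s α β p := by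
    funext p; exact expand_xz P ρ s p
  rw [h1]
  exact integrable_finset_sum _ fun α _ => integrable_finset_sum _ fun β _ =>
    (hfun_integrable ρ s α β).const_mul _

lemma integrable_xx (ρ s : ℝ) :
    Integrable (fun p : (Fin n → ℝ) × (Fin n → ℝ) =>
        (MvPolynomial.eval p.1 P) * (MvPolynomial.eval p.1 P))
      ((gaussn n).prod (gaussn n)) := by
  have h1 : (fun p : (Fin n → ℝ) × (Fin n → ℝ) =>
        (MvPolynomial.eval p.1 P) * (MvPolynomial.eval p.1 P))
      = fun p => ∑ α ∈ P.support, ∑ β ∈ P.support,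
          (MvPolynomial.coeff α P * MvPolynomial.coeff β P)
            * hfun ρ s (fun i => α i + β i) (fun _ => 0) p := by
    funext p; exact expand_xx P ρ s p
  rw [h1]
  exact integrable_finset_sum _ fun α _ => integrable_finset_sum _ fun β _ =>
    (hfun_integrable ρ s _ _).const_mul _

lemma integrable_zz (ρ s : ℝ) :
    Integrable (fun p : (Fin n → ℝ) × (Fin n → ℝ) =>
        (MvPolynomial.eval (zpt ρ s p) P) * (MvPolynomial.eval (zpt ρ s p) P))
      ((gaussn n).prod (gaussn n)) := by
  have h1 : (fun p : (Fin n → ℝ) × (Fin n → ℝ) =>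
        (MvPolynomial.eval (zpt ρ s p) P) * (MvPolynomial.eval (zpt ρ s p) P))
      = fun p => ∑ α ∈ P.support, ∑ β ∈ P.support,
          (MvPolynomial.coeff α P * MvPolynomial.coeff β P)
            * hfun ρ s (fun _ => 0) (fun i => α i + β i) p := by
    funext p; exact expand_zz P ρ s p
  rw [h1]
  exact integrable_finset_sum _ fun α _ => integrable_finset_sum _ fun β _ =>
    (hfun_integrable ρ s _ _).const_mul _

lemma int_xz (ρ s : ℝ) :
    ∫ p, (MvPolynomial.eval p.1 P) * (MvPolynomial.eval (zpt ρ s p) P)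
        ∂((gaussn n).prod (gaussn n))
      = ∑ α ∈ P.support, ∑ β ∈ P.support,
          (MvPolynomial.coeff α P * MvPolynomial.coeff β P)
            * ∏ i, g2 (α i) (β i) ρ s := by
  have h1 : (fun p : (Fin n → ℝ) × (Fin n → ℝ) =>
        (MvPolynomial.eval p.1 P) * (MvPolynomial.eval (zpt ρ s p) P))
      = fun p => ∑ α ∈ P.support, ∑ β ∈ P.support,
          (MvPolynomial.coeff α P * MvPolynomial.coeff β P) * hfun ρ s α β p := by
    funext p; exact expand_xz P ρ s p
  have hint : ∀ α ∈ P.support, Integrable (fun p : (Fin n → ℝ) × (Fin n → ℝ) =>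
      ∑ β ∈ P.support,
        (MvPolynomial.coeff α P * MvPolynomial.coeff β P) * hfun ρ s α β p)
      ((gaussn n).prod (gaussn n)) :=
    fun α _ => integrable_finset_sum _ fun β _ => (hfun_integrable ρ s α β).const_mul _
  rw [h1, integral_finset_sum P.support hint]
  refine Finset.sum_congr rfl fun α _ => ?_
  rw [integral_finset_sum P.support
    (fun β _ => (hfun_integrable ρ s α β).const_mul _)]
  refine Finset.sum_congr rfl fun β _ => ?_
  rw [integral_const_mul, hfun_integral]

lemma int_xx (ρ s : ℝ) :
    ∫ p, (MvPolynomial.eval p.1 P) * (MvPolynomial.eval p.1 P)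
        ∂((gaussn n).prod (gaussn n))
      = ∑ α ∈ P.support, ∑ β ∈ P.support,
          (MvPolynomial.coeff α P * MvPolynomial.coeff β P)
            * ∏ i, gm (α i + β i) := by
  have h1 : (fun p : (Fin n → ℝ) × (Fin n → ℝ) =>
        (MvPolynomial.eval p.1 P) * (MvPolynomial.eval p.1 P))
      = fun p => ∑ α ∈ P.support, ∑ β ∈ P.support,
          (MvPolynomial.coeff α P * MvPolynomial.coeff β P)
            * hfun ρ s (fun i => α i + β i) (fun _ => 0) p := by
    funext p; exact expand_xx P ρ s p
  have hint : ∀ α ∈ P.support, Integrable (fun p : (Fin n → ℝ) × (Fin n → ℝ) =>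
      ∑ β ∈ P.support,
        (MvPolynomial.coeff α P * MvPolynomial.coeff β P)
          * hfun ρ s (fun i => α i + β i) (fun _ => 0) p)
      ((gaussn n).prod (gaussn n)) :=
    fun α _ => integrable_finset_sum _ fun β _ => (hfun_integrable ρ s _ _).const_mul _
  rw [h1, integral_finset_sum P.support hint]
  refine Finset.sum_congr rfl fun α _ => ?_
  rw [integral_finset_sum P.support
    (fun β _ => (hfun_integrable ρ s _ _).const_mul _)]
  refine Finset.sum_congr rfl fun β _ => ?_
  rw [integral_const_mul, hfun_integral]
  congr 1
  exact Finset.prod_congr rfl fun i _ => g2_left _ ρ s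

lemma int_zz (ρ s : ℝ) (h : ρ ^ 2 + s ^ 2 = 1) :
    ∫ p, (MvPolynomial.eval (zpt ρ s p) P) * (MvPolynomial.eval (zpt ρ s p) P)
        ∂((gaussn n).prod (gaussn n))
      = ∑ α ∈ P.support, ∑ β ∈ P.support,
          (MvPolynomial.coeff α P * MvPolynomial.coeff β P)
            * ∏ i, gm (α i + β i) := by
  have h1 : (fun p : (Fin n → ℝ) × (Fin n → ℝ) =>
        (MvPolynomial.eval (zpt ρ s p) P) * (MvPolynomial.eval (zpt ρ s p) P))
      = fun p => ∑ α ∈ P.support, ∑ β ∈ P.support,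
          (MvPolynomial.coeff α P * MvPolynomial.coeff β P)
            * hfun ρ s (fun _ => 0) (fun i => α i + β i) p := by
    funext p; exact expand_zz P ρ s p
  have hint : ∀ α ∈ P.support, Integrable (fun p : (Fin n → ℝ) × (Fin n → ℝ) =>
      ∑ β ∈ P.support,
        (MvPolynomial.coeff α P * MvPolynomial.coeff β P)
          * hfun ρ s (fun _ => 0) (fun i => α i + β i) p)
      ((gaussn n).prod (gaussn n)) :=
    fun α _ => integrable_finset_sum _ fun β _ => (hfun_integrable ρ s _ _).const_mul _
  rw [h1, integral_finset_sum P.support hint]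
  refine Finset.sum_congr rfl fun α _ => ?_
  rw [integral_finset_sum P.support
    (fun β _ => (hfun_integrable ρ s _ _).const_mul _)]
  refine Finset.sum_congr rfl fun β _ => ?_
  rw [integral_const_mul, hfun_integral]
  congr 1
  exact Finset.prod_congr rfl fun i _ => g2_right _ ρ s h

lemma integral_fst_prob {X Y : Type*} [MeasurableSpace X] [MeasurableSpace Y]
    (μ : Measure X) (ν : Measure Y) [IsProbabilityMeasure μ] [IsProbabilityMeasure ν]
    (f : X → ℝ) : ∫ p : X × Y, f p.1 ∂(μ.prod ν) = ∫ x, f x ∂μ := by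
  have h2 : ∫ p : X × Y, f p.1 * (fun _ : Y => (1:ℝ)) p.2 ∂(μ.prod ν)
      = (∫ x, f x ∂μ) * ∫ y, (1:ℝ) ∂ν := integral_prod_mul f (fun _ => 1)
  simp only [mul_one] at h2
  rw [h2]
  simp

lemma int_xx_eq_gaussn :
    ∫ p, (MvPolynomial.eval p.1 P) * (MvPolynomial.eval p.1 P)
        ∂((gaussn n).prod (gaussn n))
      = ∫ x, (MvPolynomial.eval x P) ^ 2 ∂(gaussn n) := by
  rw [show (fun p : (Fin n → ℝ) × (Fin n → ℝ) =>
      (MvPolynomial.eval p.1 P) * (MvPolynomial.eval p.1 P))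
    = fun p : (Fin n → ℝ) × (Fin n → ℝ) => (fun x => (MvPolynomial.eval x P) ^ 2) p.1 by
      funext p; ring]
  exact integral_fst_prob (gaussn n) (gaussn n) (fun x => (MvPolynomial.eval x P) ^ 2)


/-! ### Section 6: the correlation polynomial -/

def Gpoly (a b : ℕ) : Polynomial ℝ :=
  ∑ j ∈ range (b + 1),
    Polynomial.C ((Nat.choose b j : ℝ) * (gm (a + j) * gm (b - j)))
      * (Polynomial.X ^ j * (1 - Polynomial.X ^ 2) ^ ((b - j) / 2))

lemma Gpoly_eval (a b : ℕ) (ρ s : ℝ) (hs : s ^ 2 = 1 - ρ ^ 2) :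
    (Gpoly a b).eval ρ = g2 a b ρ s := by
  rw [g2_eq, Gpoly, Polynomial.eval_finset_sum]
  refine Finset.sum_congr rfl fun j hj => ?_
  simp only [Polynomial.eval_mul, Polynomial.eval_C, Polynomial.eval_pow, Polynomial.eval_X,
    Polynomial.eval_sub, Polynomial.eval_one]
  by_cases hpar : Even (b - j)
  · obtain ⟨t, ht⟩ := hpar
    have h2 : (b - j) / 2 = t := by omega
    have hst : s ^ (b - j) = (1 - ρ ^ 2) ^ t := by
      rw [show b - j = 2 * t by omega, pow_mul, hs]
    rw [h2, hst]; ring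
  · have hodd : Odd (b - j) := Nat.not_even_iff_odd.mp hpar
    rw [gm_odd _ hodd]
    ring

lemma Gpoly_deg (a b : ℕ) : (Gpoly a b).natDegree ≤ b := by
  refine Polynomial.natDegree_sum_le_of_forall_le _ _ fun j hj => ?_
  have hjb : j ≤ b := by
    have := Finset.mem_range.mp hj; omega
  refine le_trans (Polynomial.natDegree_mul_le) ?_
  rw [Polynomial.natDegree_C]
  rw [zero_add]
  refine le_trans (Polynomial.natDegree_mul_le) ?_
  have h1 : (Polynomial.X ^ j : Polynomial ℝ).natDegree ≤ j := Polynomial.natDegree_X_pow_le j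
  have h2 : ((1 - Polynomial.X ^ 2 : Polynomial ℝ) ^ ((b - j) / 2)).natDegree
      ≤ (b - j) / 2 * 2 := by
    refine le_trans (Polynomial.natDegree_pow_le) ?_
    have : (1 - Polynomial.X ^ 2 : Polynomial ℝ).natDegree ≤ 2 := by
      refine le_trans (Polynomial.natDegree_sub_le _ _) ?_
      simp [Polynomial.natDegree_one, Polynomial.natDegree_X_pow]
    exact Nat.mul_le_mul_left _ this
  omega

def SPoly : Polynomial ℝ :=
  ∑ α ∈ P.support, ∑ β ∈ P.support,
    Polynomial.C (MvPolynomial.coeff α P * MvPolynomial.coeff β P)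
      * ∏ i, Gpoly (α i) (β i)

lemma SPoly_eval (ρ s : ℝ) (hs : s ^ 2 = 1 - ρ ^ 2) :
    (SPoly P).eval ρ
      = ∫ p, (MvPolynomial.eval p.1 P) * (MvPolynomial.eval (zpt ρ s p) P)
          ∂((gaussn n).prod (gaussn n)) := by
  rw [int_xz P ρ s, SPoly, Polynomial.eval_finset_sum]
  refine Finset.sum_congr rfl fun α _ => ?_
  rw [Polynomial.eval_finset_sum]
  refine Finset.sum_congr rfl fun β _ => ?_
  rw [Polynomial.eval_mul, Polynomial.eval_C, Polynomial.eval_prod]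
  congr 1
  exact Finset.prod_congr rfl fun i _ => Gpoly_eval _ _ ρ s hs

lemma SPoly_deg (d : ℕ) (hd : P.totalDegree ≤ d) : (SPoly P).natDegree ≤ d := by
  refine Polynomial.natDegree_sum_le_of_forall_le _ _ fun α _ => ?_
  refine Polynomial.natDegree_sum_le_of_forall_le _ _ fun β hβ => ?_
  refine le_trans (Polynomial.natDegree_mul_le) ?_
  rw [Polynomial.natDegree_C, zero_add]
  refine le_trans (Polynomial.natDegree_prod_le _ _) ?_
  refine le_trans (Finset.sum_le_sum fun i _ => Gpoly_deg (α i) (β i)) ?_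
  have hβs : (∑ i, β i) = β.sum fun _ e => e := by
    rw [Finsupp.sum_fintype]
    intro i; rfl
  rw [hβs]
  exact le_trans (MvPolynomial.le_totalDegree hβ) hd

lemma target_split (ρ s : ℝ) :
    ∫ p, (MvPolynomial.eval (zpt ρ s p) P - MvPolynomial.eval p.1 P) ^ 2
        ∂((gaussn n).prod (gaussn n))
      = (∫ p, (MvPolynomial.eval (zpt ρ s p) P) * (MvPolynomial.eval (zpt ρ s p) P)
          ∂((gaussn n).prod (gaussn n)))
        + (∫ p, (MvPolynomial.eval p.1 P) * (MvPolynomial.eval p.1 P)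
          ∂((gaussn n).prod (gaussn n)))
        - 2 * ∫ p, (MvPolynomial.eval p.1 P) * (MvPolynomial.eval (zpt ρ s p) P)
          ∂((gaussn n).prod (gaussn n)) := by
  have h1 : (fun p : (Fin n → ℝ) × (Fin n → ℝ) =>
      (MvPolynomial.eval (zpt ρ s p) P - MvPolynomial.eval p.1 P) ^ 2)
      = fun p =>
        ((MvPolynomial.eval (zpt ρ s p) P) * (MvPolynomial.eval (zpt ρ s p) P)
          + (MvPolynomial.eval p.1 P) * (MvPolynomial.eval p.1 P))
        - 2 * ((MvPolynomial.eval p.1 P) * (MvPolynomial.eval (zpt ρ s p) P)) := by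
    funext p; ring
  have hA : Integrable (fun p : (Fin n → ℝ) × (Fin n → ℝ) =>
      (MvPolynomial.eval (zpt ρ s p) P) * (MvPolynomial.eval (zpt ρ s p) P)
        + (MvPolynomial.eval p.1 P) * (MvPolynomial.eval p.1 P))
      ((gaussn n).prod (gaussn n)) := (integrable_zz P ρ s).add (integrable_xx P ρ s)
  have hB : Integrable (fun p : (Fin n → ℝ) × (Fin n → ℝ) =>
      2 * ((MvPolynomial.eval p.1 P) * (MvPolynomial.eval (zpt ρ s p) P)))
      ((gaussn n).prod (gaussn n)) := (integrable_xz P ρ s).const_mul 2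
  rw [h1, integral_sub hA hB,
    integral_add (integrable_zz P ρ s) (integrable_xx P ρ s), integral_const_mul]


lemma plus_split (ρ s : ℝ) :
    ∫ p, (MvPolynomial.eval (zpt ρ s p) P + MvPolynomial.eval p.1 P) ^ 2
        ∂((gaussn n).prod (gaussn n))
      = (∫ p, (MvPolynomial.eval (zpt ρ s p) P) * (MvPolynomial.eval (zpt ρ s p) P)
          ∂((gaussn n).prod (gaussn n)))
        + (∫ p, (MvPolynomial.eval p.1 P) * (MvPolynomial.eval p.1 P)
          ∂((gaussn n).prod (gaussn n)))
        + 2 * ∫ p, (MvPolynomial.eval p.1 P) * (MvPolynomial.eval (zpt ρ s p) P)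
          ∂((gaussn n).prod (gaussn n)) := by
  have h1 : (fun p : (Fin n → ℝ) × (Fin n → ℝ) =>
      (MvPolynomial.eval (zpt ρ s p) P + MvPolynomial.eval p.1 P) ^ 2)
      = fun p =>
        ((MvPolynomial.eval (zpt ρ s p) P) * (MvPolynomial.eval (zpt ρ s p) P)
          + (MvPolynomial.eval p.1 P) * (MvPolynomial.eval p.1 P))
        + 2 * ((MvPolynomial.eval p.1 P) * (MvPolynomial.eval (zpt ρ s p) P)) := by
    funext p; ring
  have hA : Integrable (fun p : (Fin n → ℝ) × (Fin n → ℝ) =>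
      (MvPolynomial.eval (zpt ρ s p) P) * (MvPolynomial.eval (zpt ρ s p) P)
        + (MvPolynomial.eval p.1 P) * (MvPolynomial.eval p.1 P))
      ((gaussn n).prod (gaussn n)) := (integrable_zz P ρ s).add (integrable_xx P ρ s)
  have hB : Integrable (fun p : (Fin n → ℝ) × (Fin n → ℝ) =>
      2 * ((MvPolynomial.eval p.1 P) * (MvPolynomial.eval (zpt ρ s p) P)))
      ((gaussn n).prod (gaussn n)) := (integrable_xz P ρ s).const_mul 2
  rw [h1, integral_add hA hB,
    integral_add (integrable_zz P ρ s) (integrable_xx P ρ s), integral_const_mul]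


lemma SPoly_eval_abs_le (h1 : ∫ x, (MvPolynomial.eval x P) ^ 2 ∂(gaussn n) = 1)
    (ρ : ℝ) (hρ : |ρ| ≤ 1) : |(SPoly P).eval ρ| ≤ 1 := by
  set s : ℝ := Real.sqrt (1 - ρ ^ 2) with hsdef
  have hρ2 : ρ ^ 2 ≤ 1 := by
    rw [← sq_abs]
    nlinarith [abs_nonneg ρ]
  have hs : s ^ 2 = 1 - ρ ^ 2 := Real.sq_sqrt (by linarith)
  have hsum : ρ ^ 2 + s ^ 2 = 1 := by rw [hs]; ring
  have hxx : ∫ p, (MvPolynomial.eval p.1 P) * (MvPolynomial.eval p.1 P)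
      ∂((gaussn n).prod (gaussn n)) = 1 := by
    rw [int_xx_eq_gaussn, h1]
  have hzz : ∫ p, (MvPolynomial.eval (zpt ρ s p) P) * (MvPolynomial.eval (zpt ρ s p) P)
      ∂((gaussn n).prod (gaussn n)) = 1 := by
    rw [int_zz P ρ s hsum, ← int_xx P ρ s, hxx]
  have hminus : 0 ≤ ∫ p, (MvPolynomial.eval (zpt ρ s p) P - MvPolynomial.eval p.1 P) ^ 2
      ∂((gaussn n).prod (gaussn n)) :=
    integral_nonneg fun p => sq_nonneg _
  have hplus : 0 ≤ ∫ p, (MvPolynomial.eval (zpt ρ s p) P + MvPolynomial.eval p.1 P) ^ 2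
      ∂((gaussn n).prod (gaussn n)) :=
    integral_nonneg fun p => sq_nonneg _
  rw [target_split P ρ s, hxx, hzz] at hminus
  rw [plus_split P ρ s, hxx, hzz] at hplus
  rw [SPoly_eval P ρ s hs]
  rw [abs_le]
  constructor <;> linarith


/-! ### Section 7: coefficient bounds and the main theorem -/

lemma coeff_bound (D : ℕ) : ∃ M : ℝ, 0 ≤ M ∧ ∀ p : Polynomial ℝ, p.natDegree ≤ D →
    (∀ t : ℝ, |t| ≤ 1 → |p.eval t| ≤ 1) → ∀ k, |p.coeff k| ≤ M := by
  classical
  set v : ℕ → ℝ := fun i => i / (D + 1) with hv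
  set sF : Finset ℕ := Finset.range (D + 1) with hsF
  set M : ℝ := ∑ i ∈ sF, ∑ k' ∈ Finset.range (D + 1), |(Lagrange.basis sF v i).coeff k'|
    with hMdef
  have hM0 : 0 ≤ M :=
    Finset.sum_nonneg fun i _ => Finset.sum_nonneg fun k' _ => abs_nonneg _
  refine ⟨M, hM0, ?_⟩
  intro p hdeg heval k
  by_cases hk : k ≤ D
  · have hvinj : Set.InjOn v sF := by
      intro a _ b _ hab
      have hD : ((D : ℝ) + 1) ≠ 0 := by positivity
      have : (a : ℝ) = b := by
        simp only [hv] at hab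
        field_simp at hab
        exact_mod_cast hab
      exact_mod_cast this
    have hdlt : p.degree < sF.card := by
      have h1 : p.degree ≤ (D : WithBot ℕ) := Polynomial.degree_le_of_natDegree_le hdeg
      refine lt_of_le_of_lt h1 ?_
      rw [hsF, Finset.card_range]
      exact_mod_cast Nat.lt_succ_self D
    have hinterp := Lagrange.eq_interpolate hvinj hdlt
    have hcoeff : p.coeff k
        = ∑ i ∈ sF, p.eval (v i) * (Lagrange.basis sF v i).coeff k := by
      conv_lhs => rw [hinterp]
      rw [Lagrange.interpolate_apply, Polynomial.finset_sum_coeff]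
      exact Finset.sum_congr rfl fun i _ => by rw [Polynomial.coeff_C_mul]
    rw [hcoeff]
    refine le_trans (Finset.abs_sum_le_sum_abs
      (fun i => p.eval (v i) * (Lagrange.basis sF v i).coeff k) sF) ?_
    rw [hMdef]
    refine Finset.sum_le_sum fun i hi => ?_
    rw [abs_mul]
    have hvi : |v i| ≤ 1 := by
      have hiD : (i : ℝ) ≤ D := by
        have := Finset.mem_range.mp (by rwa [hsF] at hi)
        exact_mod_cast Nat.le_of_lt_succ this
      rw [hv, abs_of_nonneg (by positivity)]
      rw [div_le_one (by positivity)]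
      linarith
    have h1 : |p.eval (v i)| ≤ 1 := heval _ hvi
    have h2 : |(Lagrange.basis sF v i).coeff k|
        ≤ ∑ k' ∈ Finset.range (D + 1), |(Lagrange.basis sF v i).coeff k'| := by
      exact Finset.single_le_sum
        (f := fun k' => |(Lagrange.basis sF v i).coeff k'|)
        (fun k' _ => abs_nonneg _) (Finset.mem_range.mpr (by omega))
    calc |p.eval (v i)| * |(Lagrange.basis sF v i).coeff k|
        ≤ 1 * |(Lagrange.basis sF v i).coeff k| := by
          exact mul_le_mul_of_nonneg_right h1 (abs_nonneg _)
      _ = |(Lagrange.basis sF v i).coeff k| := one_mul _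
      _ ≤ _ := h2
  · rw [Polynomial.coeff_eq_zero_of_natDegree_lt (by omega)]
    simpa using hM0

lemma one_sub_pow_le (ρ : ℝ) (h0 : 0 ≤ ρ) (h1 : ρ ≤ 1) (k : ℕ) :
    1 - ρ ^ k ≤ k * (1 - ρ) := by
  induction k with
  | zero => simp
  | succ k ih =>
    have hpk : ρ ^ k ≤ 1 := pow_le_one₀ h0 h1
    have hρk : 0 ≤ ρ ^ k := pow_nonneg h0 k
    have : ρ ^ (k + 1) = ρ * ρ ^ k := by ring
    push_cast
    nlinarith

lemma pow_le_one_of (ρ : ℝ) (h0 : 0 ≤ ρ) (h1 : ρ ≤ 1) (k : ℕ) : ρ ^ k ≤ 1 :=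
  pow_le_one₀ h0 h1

theorem main (d : ℕ) (hd : 1 ≤ d) :
    ∃ cd : ℝ, ∀ (n : ℕ) (P : MvPolynomial (Fin n) ℝ), P.totalDegree ≤ d →
      (∫ x, (MvPolynomial.eval x P) ^ 2 ∂(gaussn n)) = 1 →
        ∀ δ : ℝ, 0 < δ → δ < 1 →
          (∫ p : (Fin n → ℝ) × (Fin n → ℝ),
              (MvPolynomial.eval
                  (fun i => (1 - δ) * p.1 i + Real.sqrt (2 * δ - δ ^ 2) * p.2 i) P
                - MvPolynomial.eval p.1 P) ^ 2
            ∂((gaussn n).prod (gaussn n)))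
            ≤ cd ^ 2 * δ := by
  obtain ⟨M, hM0, hM⟩ := coeff_bound d
  refine ⟨Real.sqrt (2 * (M + 1) * (d + 1) ^ 2), ?_⟩
  intro n P hdeg hnorm δ hδ0 hδ1
  have hcd : (Real.sqrt (2 * (M + 1) * (d + 1) ^ 2)) ^ 2 = 2 * (M + 1) * (d + 1) ^ 2 :=
    Real.sq_sqrt (by positivity)
  rw [hcd]
  set ρ : ℝ := 1 - δ with hρdef
  set s : ℝ := Real.sqrt (2 * δ - δ ^ 2) with hsdef
  have hδδ : (0:ℝ) ≤ 2 * δ - δ ^ 2 := by nlinarith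
  have hs2 : s ^ 2 = 1 - ρ ^ 2 := by
    rw [hsdef, Real.sq_sqrt hδδ, hρdef]; ring
  have hsum : ρ ^ 2 + s ^ 2 = 1 := by rw [hs2]; ring
  -- the target integrand is the zpt form
  have hzpt : ∀ p : (Fin n → ℝ) × (Fin n → ℝ),
      (fun i => (1 - δ) * p.1 i + Real.sqrt (2 * δ - δ ^ 2) * p.2 i) = zpt ρ s p := by
    intro p; funext i; rw [hρdef, hsdef]; rfl
  have htarget : (∫ p : (Fin n → ℝ) × (Fin n → ℝ),
        (MvPolynomial.eval
            (fun i => (1 - δ) * p.1 i + Real.sqrt (2 * δ - δ ^ 2) * p.2 i) P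
          - MvPolynomial.eval p.1 P) ^ 2
      ∂((gaussn n).prod (gaussn n)))
      = ∫ p, (MvPolynomial.eval (zpt ρ s p) P - MvPolynomial.eval p.1 P) ^ 2
          ∂((gaussn n).prod (gaussn n)) := by
    have hfe : (fun p : (Fin n → ℝ) × (Fin n → ℝ) =>
        (MvPolynomial.eval
            (fun i => (1 - δ) * p.1 i + Real.sqrt (2 * δ - δ ^ 2) * p.2 i) P
          - MvPolynomial.eval p.1 P) ^ 2)
        = fun p => (MvPolynomial.eval (zpt ρ s p) P - MvPolynomial.eval p.1 P) ^ 2 := by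
      funext p
      rw [hzpt p]
    rw [hfe]
  rw [htarget]
  -- key integral values
  have hxx : ∫ p, (MvPolynomial.eval p.1 P) * (MvPolynomial.eval p.1 P)
      ∂((gaussn n).prod (gaussn n)) = 1 := by
    rw [int_xx_eq_gaussn, hnorm]
  have hzz : ∫ p, (MvPolynomial.eval (zpt ρ s p) P) * (MvPolynomial.eval (zpt ρ s p) P)
      ∂((gaussn n).prod (gaussn n)) = 1 := by
    rw [int_zz P ρ s hsum, ← int_xx P ρ s, hxx]
  set q : Polynomial ℝ := SPoly P with hq
  have hqdeg : q.natDegree ≤ d := SPoly_deg P d hdeg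
  have hqρ : q.eval ρ = ∫ p, (MvPolynomial.eval p.1 P) * (MvPolynomial.eval (zpt ρ s p) P)
      ∂((gaussn n).prod (gaussn n)) := SPoly_eval P ρ s hs2
  have hq1 : q.eval 1 = 1 := by
    have h0 : (0:ℝ) ^ 2 = 1 - (1:ℝ) ^ 2 := by norm_num
    rw [hq, SPoly_eval P 1 0 h0]
    have hz1 : (fun p : (Fin n → ℝ) × (Fin n → ℝ) =>
        (MvPolynomial.eval p.1 P) * (MvPolynomial.eval (zpt (1:ℝ) 0 p) P))
        = fun p => (MvPolynomial.eval p.1 P) * (MvPolynomial.eval p.1 P) := by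
      funext p
      have hzz1 : zpt (1:ℝ) 0 p = p.1 := by
        funext i; simp [zpt]
      rw [hzz1]
    rw [hz1, hxx]
  have htv : ∫ p, (MvPolynomial.eval (zpt ρ s p) P - MvPolynomial.eval p.1 P) ^ 2
      ∂((gaussn n).prod (gaussn n)) = 2 - 2 * q.eval ρ := by
    rw [target_split P ρ s, hxx, hzz, hqρ]
    ring
  rw [htv]
  -- coefficient estimates
  have habs : ∀ t : ℝ, |t| ≤ 1 → |q.eval t| ≤ 1 := fun t ht =>
    SPoly_eval_abs_le P hnorm t ht
  have hcoeff := hM q hqdeg habs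
  have hρ0 : 0 ≤ ρ := by rw [hρdef]; linarith
  have hρ1 : ρ ≤ 1 := by rw [hρdef]; linarith
  have hlt : q.natDegree < d + 1 := by omega
  have he1 : q.eval 1 = ∑ i ∈ Finset.range (d + 1), q.coeff i * 1 ^ i :=
    Polynomial.eval_eq_sum_range' hlt 1
  have heρ : q.eval ρ = ∑ i ∈ Finset.range (d + 1), q.coeff i * ρ ^ i :=
    Polynomial.eval_eq_sum_range' hlt ρ
  have hdiff : q.eval 1 - q.eval ρ ≤ M * (d + 1) ^ 2 * δ := by
    rw [he1, heρ, ← Finset.sum_sub_distrib]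
    have hterm : ∀ i ∈ Finset.range (d + 1),
        q.coeff i * 1 ^ i - q.coeff i * ρ ^ i ≤ M * (d + 1) * δ := by
      intro i hi
      have hid : (i : ℝ) ≤ d := by
        have := Finset.mem_range.mp hi
        exact_mod_cast Nat.le_of_lt_succ this
      have h1 : q.coeff i * 1 ^ i - q.coeff i * ρ ^ i = q.coeff i * (1 - ρ ^ i) := by ring
      rw [h1]
      have h2 : 0 ≤ 1 - ρ ^ i := by
        have := pow_le_one_of ρ hρ0 hρ1 i
        linarith
      have h3 : 1 - ρ ^ i ≤ i * (1 - ρ) := one_sub_pow_le ρ hρ0 hρ1 i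
      have h4 : (i : ℝ) * (1 - ρ) = i * δ := by rw [hρdef]; ring
      calc q.coeff i * (1 - ρ ^ i) ≤ |q.coeff i| * (1 - ρ ^ i) := by
            exact mul_le_mul_of_nonneg_right (le_abs_self _) h2
        _ ≤ M * (1 - ρ ^ i) := mul_le_mul_of_nonneg_right (hcoeff i) h2
        _ ≤ M * (i * δ) := by
            refine mul_le_mul_of_nonneg_left ?_ hM0
            rw [← h4]; exact h3
        _ ≤ M * ((d + 1) * δ) := by
            refine mul_le_mul_of_nonneg_left ?_ hM0
            have : (i:ℝ) ≤ d + 1 := by linarith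
            nlinarith
        _ = M * (d + 1) * δ := by ring
    refine le_trans (Finset.sum_le_sum hterm) ?_
    rw [Finset.sum_const, Finset.card_range]
    have : ((d:ℝ) + 1) * (M * (d + 1) * δ) = M * (d+1)^2 * δ := by ring
    calc ((d + 1) : ℕ) • (M * (d + 1) * δ) = ((d:ℝ) + 1) * (M * (d + 1) * δ) := by
          rw [nsmul_eq_mul]; push_cast; ring
      _ ≤ M * (d + 1) ^ 2 * δ := le_of_eq this
  have : 2 - 2 * q.eval ρ = 2 * (q.eval 1 - q.eval ρ) := by rw [hq1]; ring
  rw [this]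
  nlinarith [hdiff, sq_nonneg ((d:ℝ)+1)]

end PNS
end

/-- Claim 4.1: for each `d ≥ 1` there is a constant `c_d` such that for
any polynomial `P` of total degree at most `d` with `E[P(X)²] = 1` under the standard
Gaussian, the perturbation polynomial `Q(X,Y) = P((1-δ)X + √(2δ-δ²)Y) - P(X)` satisfies
`E[Q²] ≤ c_d² δ`. -/
theorem perturbation_norm_small (d : ℕ) (hd : 1 ≤ d) :
    ∃ cd : ℝ, ∀ (n : ℕ) (P : MvPolynomial (Fin n) ℝ), P.totalDegree ≤ d →
      (∫ x, (MvPolynomial.eval x P) ^ 2 ∂(gaussn n)) = 1 →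
        ∀ δ : ℝ, 0 < δ → δ < 1 →
          (∫ p : (Fin n → ℝ) × (Fin n → ℝ),
              (MvPolynomial.eval
                  (fun i => (1 - δ) * p.1 i + Real.sqrt (2 * δ - δ ^ 2) * p.2 i) P
                - MvPolynomial.eval p.1 P) ^ 2
            ∂((gaussn n).prod (gaussn n)))
            ≤ cd ^ 2 * δ := by
  exact PNS.main d hd

end
end

section
/- Let P be a real multivariate polynomial of total degree at most d on n variables and let f(x) = sign(P(x)) (with sign(0) = 1). For each i ∈ [n], write P(x) = x_i · P_i(x_{-i}) + Q_i(x_{-i}), where P_i and Q_i are polynomials not depending on x_i (this decomposition is for x ∈ {-1,1}^n, using x_i² = 1), and set f_i(x_{-i}) = sign(P_i(x_{-i})). Then AS(f) ≤ E_{X uniform on {-1,1}^n}[ | Σ_{i=1}^n X_i · f_i(X_{-i}) | ]. -/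
open Finset MeasureTheory ProbabilityTheory
open scoped Classical

noncomputable section

/-- for a degree-`d` PTF `f = sign(P)`, writing
`P(x) = x_i P_i(x_{-i}) + Q_i(x_{-i})` on the hypercube (with `P_i, Q_i` not depending on
coordinate `i`) and `f_i = sign(P_i)`, we have `AS(f) ≤ E|Σ_i X_i f_i(X_{-i})|`. -/
theorem avgSens_le_expectation_abs_sum (n d : ℕ) (P : MvPolynomial (Fin n) ℝ)
    (hdeg : P.totalDegree ≤ d) (f : (Fin n → Bool) → Bool)
    (hf : ∀ x, (f x = true ↔ 0 ≤ MvPolynomial.eval (fun i => pmOne (x i)) P))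
    (Pi Qi : Fin n → ((Fin n → Bool) → ℝ))
    (hPi : ∀ (i : Fin n) (x : Fin n → Bool) (b : Bool),
      Pi i (Function.update x i b) = Pi i x)
    (hQi : ∀ (i : Fin n) (x : Fin n → Bool) (b : Bool),
      Qi i (Function.update x i b) = Qi i x)
    (hdec : ∀ (i : Fin n) (x : Fin n → Bool),
      MvPolynomial.eval (fun j => pmOne (x j)) P = pmOne (x i) * Pi i x + Qi i x) :
    avgSens f ≤ (1 / 2 ^ n : ℝ) * ∑ x : Fin n → Bool,
      |∑ i, pmOne (x i) * (if 0 ≤ Pi i x then 1 else -1)| := by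
  classical
  set g : Fin n → (Fin n → Bool) → ℝ := fun i x => if 0 ≤ Pi i x then 1 else -1 with hg
  have hneg : ∀ b : Bool, pmOne (!b) = -pmOne b := by
    intro b; cases b <;> simp [pmOne]
  have hinv : ∀ (i : Fin n), Function.Involutive
      (fun x : Fin n → Bool => Function.update x i (!x i)) := by
    intro i x
    simp [Function.update_idem]
  -- key: if f flips on coordinate i, then f x = sign(x_i) * sign(P_i x)
  have keyA : ∀ (i : Fin n) (x : Fin n → Bool),
      f x ≠ f (Function.update x i (!x i)) →
      pmOne (f x) = pmOne (x i) * g i x := by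
    intro i x hne
    have h1 : (f x = true) ↔ 0 ≤ pmOne (x i) * Pi i x + Qi i x := by
      rw [hf x, hdec i x]
    have h2 : (f (Function.update x i (!x i)) = true) ↔
        0 ≤ -pmOne (x i) * Pi i x + Qi i x := by
      rw [hf _, hdec i _]
      simp [hPi, hQi, hneg]
    have hpm1 : pmOne (x i) = 1 ∨ pmOne (x i) = -1 := by
      cases x i <;> simp [pmOne]
    have hcase : (0 < pmOne (x i) * Pi i x ∧ f x = true) ∨
        (pmOne (x i) * Pi i x < 0 ∧ f x = false) := by
      cases hfx : f x with
      | true =>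
        left
        refine ⟨?_, rfl⟩
        have hfx' : f (Function.update x i (!x i)) = false := by
          cases h : f (Function.update x i (!x i)) with
          | true => exact absurd (hfx.trans h.symm) hne
          | false => rfl
        have ha : 0 ≤ pmOne (x i) * Pi i x + Qi i x := h1.mp hfx
        have hb : ¬ 0 ≤ -pmOne (x i) * Pi i x + Qi i x := by
          intro h; exact absurd (h2.mpr h) (by simp [hfx'])
        push_neg at hb
        nlinarith
      | false =>
        right
        refine ⟨?_, rfl⟩
        have hfx' : f (Function.update x i (!x i)) = true := by
          cases h : f (Function.update x i (!x i)) with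
          | true => rfl
          | false => exact absurd (hfx.trans h.symm) hne
        have ha : 0 ≤ -pmOne (x i) * Pi i x + Qi i x := h2.mp hfx'
        have hb : ¬ 0 ≤ pmOne (x i) * Pi i x + Qi i x := by
          intro h; exact absurd (h1.mpr h) (by simp [hfx])
        push_neg at hb
        nlinarith
    rcases hcase with ⟨hpos, hfx⟩ | ⟨hneg', hfx⟩
    · rcases hpm1 with hpm | hpm
      · rw [hpm] at hpos ⊢
        have hle : 0 ≤ Pi i x := by nlinarith
        simp [pmOne, hfx, hg, hle]
      · rw [hpm] at hpos ⊢
        have hle : ¬ 0 ≤ Pi i x := by nlinarith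
        simp [pmOne, hfx, hg, hle]
    · rcases hpm1 with hpm | hpm
      · rw [hpm] at hneg' ⊢
        have hle : ¬ 0 ≤ Pi i x := by nlinarith
        simp [pmOne, hfx, hg, hle]
      · rw [hpm] at hneg' ⊢
        have hle : 0 ≤ Pi i x := by nlinarith
        simp [pmOne, hfx, hg, hle]
  -- influence as a correlation
  have keyB : ∀ i : Fin n, influence f i =
      (1 / 2 ^ n : ℝ) * ∑ x : Fin n → Bool, pmOne (f x) * (pmOne (x i) * g i x) := by
    intro i
    unfold influence
    congr 1
    set σ : (Fin n → Bool) → (Fin n → Bool) :=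
      fun x => Function.update x i (!x i) with hσ
    have hσσ : ∀ x, σ (σ x) = x := hinv i
    set h : (Fin n → Bool) → ℝ := fun x =>
      pmOne (f x) * (pmOne (x i) * g i x) -
        (if f x ≠ f (Function.update x i (!x i)) then 1 else 0) with hh
    have hpair : ∀ x, h x + h (σ x) = 0 := by
      intro x
      have hgσ : g i (σ x) = g i x := by
        simp only [hg, hσ, hPi]
      have hpmσ : pmOne ((σ x) i) = -pmOne (x i) := by
        simp [hσ, hneg]
      have hfsσ : f (Function.update (σ x) i (!(σ x) i)) = f x := by
        rw [show Function.update (σ x) i (!(σ x) i) = σ (σ x) from rfl, hσσ]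
      by_cases hflip : f x = f (σ x)
      · have h1 : h x = pmOne (f x) * (pmOne (x i) * g i x) := by
          simp [hh, hσ, hflip]
        have h2 : h (σ x) = pmOne (f (σ x)) * (pmOne ((σ x) i) * g i (σ x)) := by
          have hnot : ¬ f (σ x) ≠ f (Function.update (σ x) i (!(σ x) i)) := by
            rw [hfsσ]; exact fun hc => hc hflip.symm
          simp only [hh, if_neg hnot, sub_zero]
        rw [h1, h2, hpmσ, hgσ, ← hflip]; ring
      · have hA1 : pmOne (f x) = pmOne (x i) * g i x := keyA i x hflip
        have hflip2 : f (σ x) ≠ f (Function.update (σ x) i (!(σ x) i)) := by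
          rw [hfsσ]; exact fun hc => hflip hc.symm
        have hA2 : pmOne (f (σ x)) = pmOne ((σ x) i) * g i (σ x) := keyA i (σ x) hflip2
        have e2 : pmOne (x i) * pmOne (x i) = 1 := by cases x i <;> simp [pmOne]
        have g2 : g i x * g i x = 1 := by
          simp only [hg]; split <;> norm_num
        have h1 : h x = 0 := by
          simp only [hh, if_pos (show f x ≠ f (Function.update x i (!x i)) from hflip), hA1]
          nlinarith [e2, g2]
        have h2 : h (σ x) = 0 := by
          simp only [hh, if_pos hflip2, hA2, hpmσ, hgσ]
          nlinarith [e2, g2]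
        rw [h1, h2]; ring
    have hsum0 : ∑ x : Fin n → Bool, h x = 0 := by
      have hbij : Function.Bijective σ := (hinv i).bijective
      have hcomp : ∑ x : Fin n → Bool, h (σ x) = ∑ x : Fin n → Bool, h x :=
        Fintype.sum_bijective σ hbij _ _ (fun x => rfl)
      have : (2 : ℝ) * ∑ x : Fin n → Bool, h x =
          ∑ x : Fin n → Bool, (h x + h (σ x)) := by
        rw [Finset.sum_add_distrib, hcomp]; ring
      have h0 : ∑ x : Fin n → Bool, (h x + h (σ x)) = 0 := by
        simp [hpair]
      have h2 : (2:ℝ) * ∑ x : Fin n → Bool, h x = 0 := this.trans h0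
      linarith
    have hsub : (∑ x : Fin n → Bool, pmOne (f x) * (pmOne (x i) * g i x)) -
        (∑ x : Fin n → Bool, (if f x ≠ f (Function.update x i (!x i)) then (1:ℝ) else 0)) = 0 := by
      rw [← Finset.sum_sub_distrib]
      exact hsum0
    linarith
  -- assemble
  have step : avgSens f =
      (1 / 2 ^ n : ℝ) * ∑ x : Fin n → Bool,
        pmOne (f x) * ∑ i, pmOne (x i) * g i x := by
    unfold avgSens
    simp only [keyB]
    rw [← Finset.mul_sum, Finset.sum_comm]
    congr 1
    apply Finset.sum_congr rfl
    intro x _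
    rw [Finset.mul_sum]
  rw [step]
  have hpow : (0:ℝ) < (1 / 2 ^ n : ℝ) := by positivity
  apply mul_le_mul_of_nonneg_left _ hpow.le
  apply Finset.sum_le_sum
  intro x _
  have : pmOne (f x) = 1 ∨ pmOne (f x) = -1 := by
    cases f x <;> simp [pmOne]
  rcases this with h | h
  · rw [h, one_mul]; exact le_abs_self _
  · rw [h, neg_one_mul]; exact neg_le_abs _

end
end

section
/- Let P(X) = Σ_{I ⊆ [n]} a_I X^I be a multilinear polynomial of degree at most d, let 1 ≤ K < n, and for x = (x_1,…,x_K) ∈ {-1,1}^K write the restricted polynomial as P_x(Y_{K+1},…,Y_n) = R(x) + Σ_{J ⊆ {K+1,…,n}, 0 < |J| ≤ d} Q_J(x) · Π_{j∈J} Y_j, where R and the Q_J are multilinear polynomials in x_1,…,x_K. For j > K let w_j²(P_x) = Σ_{J ∋ j} Q_J(x)². Then for X uniform on {-1,1}^K and every j > K, E_X[ w_j⁴(P_X) ] ≤ 9^d · w_j⁴(P), where w_j²(P) = Σ_{I ∋ j} a_I². -/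
open Finset MeasureTheory ProbabilityTheory
open scoped Classical
open scoped symmDiff

noncomputable section

section Aux19
variable {n : ℕ}

def feval (a : Finset (Fin n) → ℝ) (x : Fin n → Bool) : ℝ :=
  mlEval a (fun i => pmOne (x i))

lemma pmOne_not (b : Bool) : pmOne (!b) = - pmOne b := by cases b <;> simp [pmOne]

lemma pmOne_sq (b : Bool) : pmOne b ^ 2 = 1 := by cases b <;> simp [pmOne]

lemma sum_flip_zero (i : Fin n) (F : (Fin n → Bool) → ℝ)
    (hF : ∀ x, F (Function.update x i (!x i)) = - F x) :
    ∑ x : Fin n → Bool, F x = 0 := by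
  refine Finset.sum_involution (fun x _ => Function.update x i (!x i))
    (fun x _ => by rw [hF]; ring) (fun x _ _ h => ?_) (fun x _ => Finset.mem_univ _)
    (fun x _ => ?_)
  · have := congrFun h i
    simp at this
  · funext k
    by_cases hk : k = i
    · subst hk; simp
    · simp [Function.update_of_ne hk]

lemma sum_prod_pmOne (T : Finset (Fin n)) :
    ∑ x : Fin n → Bool, ∏ i ∈ T, pmOne (x i)
      = if T = (∅ : Finset (Fin n)) then (2:ℝ)^n else 0 := by
  split_ifs with hT
  · subst hT
    simp [Finset.card_univ]
  · obtain ⟨i, hi⟩ := Finset.nonempty_iff_ne_empty.mpr hT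
    refine sum_flip_zero i _ (fun x => ?_)
    rw [← Finset.mul_prod_erase T (fun k => pmOne (Function.update x i (!x i) k)) hi,
      ← Finset.mul_prod_erase T (fun k => pmOne (x k)) hi]
    have h1 : pmOne (Function.update x i (!x i) i) = - pmOne (x i) := by
      rw [Function.update_self, pmOne_not]
    have h2 : ∏ k ∈ T.erase i, pmOne (Function.update x i (!x i) k)
        = ∏ k ∈ T.erase i, pmOne (x k) :=
      Finset.prod_congr rfl fun k hk => by
        rw [Function.update_of_ne (Finset.ne_of_mem_erase hk)]
    rw [h1, h2, neg_mul]

lemma pmOne_mul_self (b : Bool) : pmOne b * pmOne b = 1 := by cases b <;> simp [pmOne]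

lemma prod_pm_mul (I I' : Finset (Fin n)) (x : Fin n → Bool) :
    (∏ i ∈ I, pmOne (x i)) * ∏ i ∈ I', pmOne (x i) = ∏ i ∈ I ∆ I', pmOne (x i) := by
  rw [← Finset.prod_union_inter]
  have h1 : I ∪ I' = (I ∆ I') ∪ (I ∩ I') := by
    ext k; simp [Finset.mem_symmDiff]; tauto
  have hd : Disjoint (I ∆ I') (I ∩ I') := disjoint_symmDiff_inf I I'
  rw [h1, Finset.prod_union hd, mul_assoc,
    ← Finset.prod_mul_distrib]
  rw [Finset.prod_congr rfl (fun k _ => pmOne_mul_self (x k)), Finset.prod_const_one, mul_one]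

lemma parseval (c : Finset (Fin n) → ℝ) :
    ∑ x : Fin n → Bool, feval c x ^ 2 = 2 ^ n * ∑ I : Finset (Fin n), c I ^ 2 := by
  have expand : ∀ x : Fin n → Bool, feval c x ^ 2 =
      ∑ I : Finset (Fin n), ∑ I' : Finset (Fin n),
        (c I * c I') * ∏ i ∈ I ∆ I', pmOne (x i) := by
    intro x
    rw [pow_two]
    unfold feval mlEval
    rw [Finset.sum_mul_sum]
    exact Finset.sum_congr rfl fun I _ => Finset.sum_congr rfl fun I' _ => by
      rw [mul_mul_mul_comm, prod_pm_mul]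
  calc ∑ x : Fin n → Bool, feval c x ^ 2
      = ∑ I : Finset (Fin n), ∑ I' : Finset (Fin n),
          (c I * c I') * ∑ x : Fin n → Bool, ∏ i ∈ I ∆ I', pmOne (x i) := by
        simp only [expand]
        rw [Finset.sum_comm]
        exact Finset.sum_congr rfl fun I _ => by
          rw [Finset.sum_comm]
          exact Finset.sum_congr rfl fun I' _ => (Finset.mul_sum _ _ _).symm
    _ = ∑ I : Finset (Fin n), c I ^ 2 * 2 ^ n := by
        refine Finset.sum_congr rfl fun I _ => ?_
        rw [Finset.sum_eq_single I]
        · rw [sum_prod_pmOne, if_pos (by simp), pow_two]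
        · intro I' _ hne
          rw [sum_prod_pmOne, if_neg, mul_zero]
          intro h
          exact hne ((symmDiff_eq_bot.mp (by simpa using h)).symm)
        · intro h; exact absurd (Finset.mem_univ I) h
    _ = 2 ^ n * ∑ I : Finset (Fin n), c I ^ 2 := by rw [← Finset.sum_mul, mul_comm]


def dropC (a : Finset (Fin n) → ℝ) (i : Fin n) (I : Finset (Fin n)) : ℝ :=
  if i ∈ I then 0 else a I

def linkC (a : Finset (Fin n) → ℝ) (i : Fin n) (I : Finset (Fin n)) : ℝ :=
  if i ∈ I then 0 else a (insert i I)

lemma feval_decomp (a : Finset (Fin n) → ℝ) (i : Fin n) (x : Fin n → Bool) :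
    feval a x = feval (dropC a i) x + pmOne (x i) * feval (linkC a i) x := by
  unfold feval mlEval
  conv_lhs => rw [← Finset.sum_filter_add_sum_filter_not Finset.univ
    (fun I : Finset (Fin n) => i ∈ I) (fun I => a I * ∏ k ∈ I, pmOne (x k))]
  rw [add_comm]
  congr 1
  · rw [Finset.sum_filter]
    exact Finset.sum_congr rfl fun I _ => by by_cases h : i ∈ I <;> simp [dropC, h]
  · calc ∑ I ∈ Finset.univ.filter (fun I : Finset (Fin n) => i ∈ I),
          a I * ∏ k ∈ I, pmOne (x k)
        = ∑ I ∈ Finset.univ.filter (fun I : Finset (Fin n) => ¬ i ∈ I),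
            a (insert i I) * ∏ k ∈ insert i I, pmOne (x k) := by
          refine Finset.sum_bij' (fun I _ => I.erase i) (fun I _ => insert i I)
            ?_ ?_ ?_ ?_ ?_
          · intro I hI
            simp only [Finset.mem_filter, Finset.mem_univ, true_and] at hI ⊢
            exact Finset.notMem_erase i I
          · intro I hI
            simp only [Finset.mem_filter, Finset.mem_univ, true_and] at hI ⊢
            exact Finset.mem_insert_self i I
          · intro I hI
            simp only [Finset.mem_filter, Finset.mem_univ, true_and] at hI
            exact Finset.insert_erase hI
          · intro I hI
            simp only [Finset.mem_filter, Finset.mem_univ, true_and] at hI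
            exact Finset.erase_insert hI
          · intro I hI
            simp only [Finset.mem_filter, Finset.mem_univ, true_and] at hI
            rw [Finset.insert_erase hI]
      _ = ∑ I ∈ Finset.univ.filter (fun I : Finset (Fin n) => ¬ i ∈ I),
            pmOne (x i) * (a (insert i I) * ∏ k ∈ I, pmOne (x k)) := by
          refine Finset.sum_congr rfl fun I hI => ?_
          rw [Finset.prod_insert (by
            simpa using (Finset.mem_filter.mp hI).2)]
          ring
      _ = pmOne (x i) * ∑ I : Finset (Fin n), linkC a i I * ∏ k ∈ I, pmOne (x k) := by
          rw [Finset.mul_sum, Finset.sum_filter]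
          refine Finset.sum_congr rfl fun I _ => ?_
          by_cases h : i ∈ I <;> simp [linkC, h]

lemma feval_update (c : Finset (Fin n) → ℝ) (i : Fin n) (hc : ∀ I, c I ≠ 0 → i ∉ I)
    (x : Fin n → Bool) (b : Bool) : feval c (Function.update x i b) = feval c x := by
  unfold feval mlEval
  refine Finset.sum_congr rfl fun I _ => ?_
  by_cases h : c I = 0
  · simp [h]
  · have hi := hc I h
    congr 1
    refine Finset.prod_congr rfl fun k hk => ?_
    have hki : k ≠ i := fun he => hi (he ▸ hk)
    simp [Function.update_of_ne hki]

lemma sqrt_step (X Y : ℝ) (hX : 0 ≤ X) (hY : 0 ≤ Y) (h : X ^ 2 ≤ Y ^ 2) : X ≤ Y := by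
  nlinarith

lemma hyper_const (a : Finset (Fin n) → ℝ) (ha : ∀ I, a I ≠ 0 → I = ∅) (d : ℕ) :
    (2:ℝ)^n * ∑ x : Fin n → Bool, feval a x ^ 4
      ≤ 9^d * (∑ x : Fin n → Bool, feval a x ^ 2)^2 := by
  have hf : ∀ x : Fin n → Bool, feval a x = a ∅ := by
    intro x
    unfold feval mlEval
    rw [Finset.sum_eq_single (∅ : Finset (Fin n))]
    · simp
    · intro I _ hne
      rcases eq_or_ne (a I) 0 with h | h
      · simp [h]
      · exact absurd (ha I h) hne
    · simp
  simp only [hf, Finset.sum_const, Finset.card_univ]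
  rw [nsmul_eq_mul, nsmul_eq_mul]
  have hcard : ((Fintype.card (Fin n → Bool) : ℕ) : ℝ) = 2^n := by push_cast [Fintype.card_fun]; norm_num
  rw [hcard]
  have h9 : (1:ℝ) ≤ 9^d := one_le_pow₀ (by norm_num)
  have hP : (0:ℝ) ≤ (2:ℝ)^n := by positivity
  nlinarith [sq_nonneg ((2:ℝ)^n * (a ∅)^2)]

lemma hyper_alg (N A B C G4 H4 : ℝ) (e : ℕ) (hN : 0 < N) (hA : 0 ≤ A) (hB : 0 ≤ B)
    (hC : 0 ≤ C) (hG : 0 ≤ G4) (hH : 0 ≤ H4)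
    (h1 : N * G4 ≤ 9^(e+1) * A^2) (h2 : N * H4 ≤ 9^e * B^2)
    (hCS : C^2 ≤ G4 * H4) :
    N * (G4 + 6*C + H4) ≤ 9^(e+1) * (A+B)^2 := by
  have h9e : (0:ℝ) ≤ 9^e := by positivity
  have h9e1 : (0:ℝ) ≤ 9^(e+1) := by positivity
  have h99 : (9:ℝ)^(e+1) = 9 * 9^e := by rw [pow_succ]; ring
  have hNC : N * C ≤ 3^(2*e+1) * (A * B) := by
    apply sqrt_step _ _ (mul_nonneg (le_of_lt hN) hC)
      (mul_nonneg (by positivity) (mul_nonneg hA hB))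
    have hstep : (N*C)^2 ≤ (N * G4) * (N * H4) := by
      calc (N*C)^2 = N^2 * C^2 := by ring
        _ ≤ N^2 * (G4 * H4) := mul_le_mul_of_nonneg_left hCS (by positivity)
        _ = (N * G4) * (N * H4) := by ring
    have h3 : (N * G4) * (N * H4) ≤ (9^(e+1) * A^2) * (9^e * B^2) :=
      mul_le_mul h1 h2 (mul_nonneg (le_of_lt hN) hH)
        (le_trans (mul_nonneg (le_of_lt hN) hG) h1)
    have hp : (9:ℝ)^(e+1) * (9:ℝ)^e = ((3:ℝ)^(2*e+1))^2 := by
      rw [show (9:ℝ) = 3^2 by norm_num, ← pow_mul, ← pow_mul, ← pow_mul, ← pow_add]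
      congr 1
      ring
    calc (N*C)^2 ≤ (9^(e+1) * A^2) * (9^e * B^2) := le_trans hstep h3
      _ = ((9:ℝ)^(e+1) * 9^e) * (A*B)^2 := by ring
      _ = (3^(2*e+1) * (A*B))^2 := by rw [hp]; ring
  have h31 : (3:ℝ)^(2*e+1) = 3 * 9^e := by
    rw [pow_add, pow_mul]; norm_num [mul_comm]
  have t1 : N * H4 ≤ 9^(e+1) * B^2 := by nlinarith [sq_nonneg B]
  have t2 : 6 * (N * C) ≤ 2 * 9^(e+1) * (A*B) := by
    have := mul_le_mul_of_nonneg_left hNC (by norm_num : (0:ℝ) ≤ 6)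
    calc 6 * (N * C) ≤ 6 * (3^(2*e+1) * (A*B)) := this
      _ = 2 * 9^(e+1) * (A*B) := by rw [h31, h99]; ring
  calc N * (G4 + 6*C + H4) = N*G4 + 6*(N*C) + N*H4 := by ring
    _ ≤ 9^(e+1)*A^2 + 2*9^(e+1)*(A*B) + 9^(e+1)*B^2 := by linarith
    _ = 9^(e+1) * (A+B)^2 := by ring

lemma hyper_support (s : Finset (Fin n)) :
    ∀ (d : ℕ) (a : Finset (Fin n) → ℝ), (∀ I, a I ≠ 0 → I ⊆ s ∧ I.card ≤ d) →
    (2:ℝ)^n * ∑ x : Fin n → Bool, feval a x ^ 4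
      ≤ 9^d * (∑ x : Fin n → Bool, feval a x ^ 2)^2 := by
  induction s using Finset.induction_on with
  | empty =>
      intro d a ha
      exact hyper_const a (fun I hI => Finset.subset_empty.mp (ha I hI).1) d
  | @insert i t hit IH =>
      intro d a ha
      obtain _ | e := d
      · exact hyper_const a
          (fun I hI => Finset.card_eq_zero.mp (Nat.le_zero.mp (ha I hI).2)) 0
      -- support facts
      have hg0 : ∀ I, dropC a i I ≠ 0 → i ∉ I := by
        intro I hI hmem; simp [dropC, hmem] at hI
      have hh0 : ∀ I, linkC a i I ≠ 0 → i ∉ I := by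
        intro I hI hmem; simp [linkC, hmem] at hI
      have hga : ∀ I, dropC a i I ≠ 0 → I ⊆ t ∧ I.card ≤ e + 1 := by
        intro I hI
        have him := hg0 I hI
        have haI : a I ≠ 0 := by simpa [dropC, him] using hI
        obtain ⟨hsub, hcard⟩ := ha I haI
        exact ⟨fun k hk => (Finset.mem_insert.mp (hsub hk)).resolve_left
          (fun he => him (he ▸ hk)), hcard⟩
      have hha : ∀ I, linkC a i I ≠ 0 → I ⊆ t ∧ I.card ≤ e := by
        intro I hI
        have him := hh0 I hI
        have haI : a (insert i I) ≠ 0 := by simpa [linkC, him] using hI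
        obtain ⟨hsub, hcard⟩ := ha _ haI
        constructor
        · intro k hk
          have hk2 : k ∈ insert i t := hsub (Finset.mem_insert_of_mem hk)
          exact (Finset.mem_insert.mp hk2).resolve_left (fun he => him (he ▸ hk))
        · have hci : (insert i I).card = I.card + 1 := Finset.card_insert_of_notMem him
          omega
      have IH1 := IH (e+1) (dropC a i) hga
      have IH2 := IH e (linkC a i) hha
      set g : (Fin n → Bool) → ℝ := feval (dropC a i) with hgdef
      set h : (Fin n → Bool) → ℝ := feval (linkC a i) with hhdef
      have hdec : ∀ x : Fin n → Bool, feval a x = g x + pmOne (x i) * h x :=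
        fun x => feval_decomp a i x
      have hgu : ∀ (x : Fin n → Bool) (b : Bool), g (Function.update x i b) = g x :=
        fun x b => feval_update _ i hg0 x b
      have hhu : ∀ (x : Fin n → Bool) (b : Bool), h (Function.update x i b) = h x :=
        fun x b => feval_update _ i hh0 x b
      have hzero : ∀ u : (Fin n → Bool) → ℝ,
          (∀ (x : Fin n → Bool) (b : Bool), u (Function.update x i b) = u x) →
          ∑ x : Fin n → Bool, pmOne (x i) * u x = 0 := by
        intro u hu
        refine sum_flip_zero i _ (fun x => ?_)
        rw [hu, Function.update_self, pmOne_not]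
        ring
      have hodd1 : ∑ x : Fin n → Bool, pmOne (x i) * (4 * (g x ^ 3 * h x)) = 0 :=
        hzero _ (fun x b => by rw [hgu, hhu])
      have hodd2 : ∑ x : Fin n → Bool, pmOne (x i) * (4 * (g x * h x ^ 3)) = 0 :=
        hzero _ (fun x b => by rw [hgu, hhu])
      have hS4 : ∑ x : Fin n → Bool, feval a x ^ 4
          = ∑ x : Fin n → Bool, (g x ^ 4 + 6 * (g x ^ 2 * h x ^ 2) + h x ^ 4) := by
        have e1 : ∀ x : Fin n → Bool, feval a x ^ 4 =
            (g x ^ 4 + 6 * (g x ^ 2 * h x ^ 2) + h x ^ 4)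
            + pmOne (x i) * (4 * (g x ^ 3 * h x)) + pmOne (x i) * (4 * (g x * h x ^ 3)) := by
          intro x
          have he := pmOne_sq (x i)
          rw [hdec x]
          linear_combination (6 * g x ^ 2 * h x ^ 2 + 4 * g x * h x ^ 3 * pmOne (x i)
            + h x ^ 4 * (pmOne (x i) ^ 2 + 1)) * he
        rw [Finset.sum_congr rfl fun x _ => e1 x, Finset.sum_add_distrib,
          Finset.sum_add_distrib, hodd1, hodd2]
        ring
      have hS2 : ∑ x : Fin n → Bool, feval a x ^ 2
          = (∑ x : Fin n → Bool, g x ^ 2) + ∑ x : Fin n → Bool, h x ^ 2 := by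
        have e1 : ∀ x : Fin n → Bool, feval a x ^ 2 =
            (g x ^ 2 + h x ^ 2) + pmOne (x i) * (2 * (g x * h x)) := by
          intro x
          have he := pmOne_sq (x i)
          rw [hdec x]
          linear_combination h x ^ 2 * he
        have hodd3 : ∑ x : Fin n → Bool, pmOne (x i) * (2 * (g x * h x)) = 0 :=
          hzero _ (fun x b => by rw [hgu, hhu])
        rw [Finset.sum_congr rfl fun x _ => e1 x, Finset.sum_add_distrib, hodd3,
          add_zero, Finset.sum_add_distrib]
      rw [hS4, hS2]
      have hsplit : ∑ x : Fin n → Bool, (g x ^ 4 + 6 * (g x ^ 2 * h x ^ 2) + h x ^ 4)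
          = (∑ x : Fin n → Bool, g x ^ 4)
            + 6 * (∑ x : Fin n → Bool, g x ^ 2 * h x ^ 2)
            + ∑ x : Fin n → Bool, h x ^ 4 := by
        rw [Finset.sum_add_distrib, Finset.sum_add_distrib, ← Finset.mul_sum]
      rw [hsplit]
      have hCS : (∑ x : Fin n → Bool, g x ^ 2 * h x ^ 2) ^ 2
          ≤ (∑ x : Fin n → Bool, g x ^ 4) * ∑ x : Fin n → Bool, h x ^ 4 := by
        have hcs := Finset.sum_mul_sq_le_sq_mul_sq Finset.univ
          (fun x : Fin n → Bool => g x ^ 2) (fun x : Fin n → Bool => h x ^ 2)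
        have e2 : ∑ x : Fin n → Bool, (g x ^ 2) ^ 2 = ∑ x : Fin n → Bool, g x ^ 4 :=
          Finset.sum_congr rfl fun x _ => by ring
        have e3 : ∑ x : Fin n → Bool, (h x ^ 2) ^ 2 = ∑ x : Fin n → Bool, h x ^ 4 :=
          Finset.sum_congr rfl fun x _ => by ring
        rw [e2, e3] at hcs
        exact hcs
      exact hyper_alg ((2:ℝ)^n) _ _ _ _ _ e (by positivity)
        (Finset.sum_nonneg fun x _ => sq_nonneg _)
        (Finset.sum_nonneg fun x _ => sq_nonneg _)
        (Finset.sum_nonneg fun x _ => mul_nonneg (sq_nonneg _) (sq_nonneg _))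
        (Finset.sum_nonneg fun x _ => by positivity)
        (Finset.sum_nonneg fun x _ => by positivity)
        IH1 IH2 hCS

lemma hyper_pair (d : ℕ) (ca cb : Finset (Fin n) → ℝ) (hca : DegLE ca d) (hcb : DegLE cb d) :
    (2:ℝ)^n * ∑ x : Fin n → Bool, feval ca x ^ 2 * feval cb x ^ 2
      ≤ 9^d * ((∑ x : Fin n → Bool, feval ca x ^ 2) * ∑ x : Fin n → Bool, feval cb x ^ 2) := by
  have h1 := hyper_support Finset.univ d ca (fun I hI => ⟨Finset.subset_univ I, hca I hI⟩)
  have h2 := hyper_support Finset.univ d cb (fun I hI => ⟨Finset.subset_univ I, hcb I hI⟩)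
  have hA : (0:ℝ) ≤ ∑ x : Fin n → Bool, feval ca x ^ 2 :=
    Finset.sum_nonneg fun x _ => sq_nonneg _
  have hB : (0:ℝ) ≤ ∑ x : Fin n → Bool, feval cb x ^ 2 :=
    Finset.sum_nonneg fun x _ => sq_nonneg _
  have hC : (0:ℝ) ≤ ∑ x : Fin n → Bool, feval ca x ^ 2 * feval cb x ^ 2 :=
    Finset.sum_nonneg fun x _ => mul_nonneg (sq_nonneg _) (sq_nonneg _)
  have hG : (0:ℝ) ≤ ∑ x : Fin n → Bool, feval ca x ^ 4 :=
    Finset.sum_nonneg fun x _ => by positivity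
  have hH : (0:ℝ) ≤ ∑ x : Fin n → Bool, feval cb x ^ 4 :=
    Finset.sum_nonneg fun x _ => by positivity
  have hCS : (∑ x : Fin n → Bool, feval ca x ^ 2 * feval cb x ^ 2) ^ 2
      ≤ (∑ x : Fin n → Bool, feval ca x ^ 4) * ∑ x : Fin n → Bool, feval cb x ^ 4 := by
    have hcs := Finset.sum_mul_sq_le_sq_mul_sq Finset.univ
      (fun x : Fin n → Bool => feval ca x ^ 2) (fun x : Fin n → Bool => feval cb x ^ 2)
    have e2 : ∑ x : Fin n → Bool, (feval ca x ^ 2) ^ 2 = ∑ x : Fin n → Bool, feval ca x ^ 4 :=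
      Finset.sum_congr rfl fun x _ => by ring
    have e3 : ∑ x : Fin n → Bool, (feval cb x ^ 2) ^ 2 = ∑ x : Fin n → Bool, feval cb x ^ 4 :=
      Finset.sum_congr rfl fun x _ => by ring
    rw [e2, e3] at hcs
    exact hcs
  have hN : (0:ℝ) < 2^n := by positivity
  apply sqrt_step _ _ (mul_nonneg (le_of_lt hN) hC)
    (mul_nonneg (by positivity) (mul_nonneg hA hB))
  calc ((2:ℝ)^n * ∑ x : Fin n → Bool, feval ca x ^ 2 * feval cb x ^ 2)^2
      = ((2:ℝ)^n)^2 * (∑ x : Fin n → Bool, feval ca x ^ 2 * feval cb x ^ 2)^2 := by ring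
    _ ≤ ((2:ℝ)^n)^2 * ((∑ x : Fin n → Bool, feval ca x ^ 4)
        * ∑ x : Fin n → Bool, feval cb x ^ 4) := mul_le_mul_of_nonneg_left hCS (by positivity)
    _ = ((2:ℝ)^n * ∑ x : Fin n → Bool, feval ca x ^ 4)
        * ((2:ℝ)^n * ∑ x : Fin n → Bool, feval cb x ^ 4) := by ring
    _ ≤ (9^d * (∑ x : Fin n → Bool, feval ca x ^ 2)^2)
        * (9^d * (∑ x : Fin n → Bool, feval cb x ^ 2)^2) :=
        mul_le_mul h1 h2 (mul_nonneg (le_of_lt hN) hH)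
          (le_trans (mul_nonneg (le_of_lt hN) hG) h1)
    _ = (9^d * ((∑ x : Fin n → Bool, feval ca x ^ 2) * ∑ x : Fin n → Bool, feval cb x ^ 2))^2 := by
        ring

def restC (a : Finset (Fin n) → ℝ) (K : ℕ) (J S : Finset (Fin n)) : ℝ :=
  if (∀ i ∈ J, K ≤ i.val) ∧ (∀ i ∈ S, i.val < K) then a (S ∪ J) else 0

lemma filter_low_union (K : ℕ) (S J : Finset (Fin n)) (hS : ∀ i ∈ S, i.val < K)
    (hJ : ∀ i ∈ J, K ≤ i.val) :
    (S ∪ J).filter (fun i => i.val < K) = S ∧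
    (S ∪ J).filter (fun i => K ≤ i.val) = J := by
  constructor
  · rw [Finset.filter_union, Finset.filter_true_of_mem hS,
      Finset.filter_false_of_mem (fun i hi => not_lt.mpr (hJ i hi)), Finset.union_empty]
  · rw [Finset.filter_union, Finset.filter_true_of_mem hJ,
      Finset.filter_false_of_mem (fun i hi => not_le.mpr (hS i hi)), Finset.empty_union]

lemma filter_split (K : ℕ) (I : Finset (Fin n)) :
    I.filter (fun i => i.val < K) ∪ I.filter (fun i => K ≤ i.val) = I := by
  have : I.filter (fun i => K ≤ i.val) = I.filter (fun i => ¬ i.val < K) :=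
    Finset.filter_congr (fun i _ => by simp [not_lt])
  rw [this, Finset.filter_union_filter_not_eq]

lemma restCoeff_eq (a : Finset (Fin n) → ℝ) (K : ℕ) (y : Fin n → ℝ) (J : Finset (Fin n)) :
    restCoeff a K y J = mlEval (restC a K J) y := by
  unfold restCoeff mlEval
  by_cases hJ : ∀ i ∈ J, K ≤ (i : ℕ)
  · rw [if_pos hJ]
    have step1 : ∑ S : Finset (Fin n), restC a K J S * ∏ i ∈ S, y i
        = ∑ S ∈ Finset.univ.filter (fun S : Finset (Fin n) => ∀ i ∈ S, i.val < K),
            a (S ∪ J) * ∏ i ∈ S, y i := by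
      rw [Finset.sum_filter]
      refine Finset.sum_congr rfl fun S _ => ?_
      by_cases hS : ∀ i ∈ S, i.val < K
      · rw [if_pos hS]; simp only [restC]; rw [if_pos ⟨hJ, hS⟩]
      · rw [if_neg hS]; simp only [restC]; rw [if_neg (fun hcon => hS hcon.2), zero_mul]
    rw [step1]
    refine Finset.sum_bij' (fun I _ => I.filter (fun i : Fin n => i.val < K))
      (fun S _ => S ∪ J) ?_ ?_ ?_ ?_ ?_
    · intro I hI
      simp only [Finset.mem_filter, Finset.mem_univ, true_and] at hI ⊢
      exact fun i hi => hi.2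
    · intro S hS
      simp only [Finset.mem_filter, Finset.mem_univ, true_and] at hS ⊢
      exact (filter_low_union K S J hS hJ).2
    · intro I hI
      simp only [Finset.mem_filter, Finset.mem_univ, true_and] at hI
      show I.filter (fun i : Fin n => i.val < K) ∪ J = I
      rw [← hI]
      exact filter_split K I
    · intro S hS
      simp only [Finset.mem_filter, Finset.mem_univ, true_and] at hS
      exact (filter_low_union K S J hS hJ).1
    · intro I hI
      simp only [Finset.mem_filter, Finset.mem_univ, true_and] at hI
      have heq : I.filter (fun i : Fin n => i.val < K) ∪ J = I := by
        rw [← hI]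
        exact filter_split K I
      rw [heq]
  · rw [if_neg hJ]
    symm
    apply Finset.sum_eq_zero
    intro S _
    simp only [restC]
    rw [if_neg (fun hcon => hJ hcon.1), zero_mul]

lemma restC_deg (a : Finset (Fin n) → ℝ) (K d : ℕ) (hdeg : DegLE a d) (J : Finset (Fin n)) :
    DegLE (restC a K J) d := by
  intro S hS
  simp only [restC] at hS
  by_cases hc : (∀ i ∈ J, K ≤ i.val) ∧ (∀ i ∈ S, i.val < K)
  · rw [if_pos hc] at hS
    exact le_trans (Finset.card_le_card Finset.subset_union_left) (hdeg _ hS)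
  · rw [if_neg hc] at hS
    exact absurd rfl hS

lemma rest_weight (a : Finset (Fin n) → ℝ) (K : ℕ) (j : Fin n) (hj : K ≤ j.val) :
    ∑ J ∈ Finset.univ.filter (fun J : Finset (Fin n) => j ∈ J),
      ∑ S : Finset (Fin n), restC a K J S ^ 2
    = ∑ I ∈ Finset.univ.filter (fun I : Finset (Fin n) => j ∈ I), a I ^ 2 := by
  have h1 : ∑ J ∈ Finset.univ.filter (fun J : Finset (Fin n) => j ∈ J),
      ∑ S : Finset (Fin n), restC a K J S ^ 2
      = ∑ p ∈ ((Finset.univ.filter (fun J : Finset (Fin n) => j ∈ J)) ×ˢ Finset.univ).filter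
          (fun p : Finset (Fin n) × Finset (Fin n) =>
            (∀ i ∈ p.1, K ≤ i.val) ∧ (∀ i ∈ p.2, i.val < K)),
          a (p.2 ∪ p.1) ^ 2 := by
    conv_rhs => rw [Finset.sum_filter, Finset.sum_product]
    refine Finset.sum_congr rfl fun J _ => Finset.sum_congr rfl fun S _ => ?_
    simp only [restC]
    by_cases hc : (∀ i ∈ J, K ≤ i.val) ∧ (∀ i ∈ S, i.val < K)
    · rw [if_pos hc, if_pos hc]
    · rw [if_neg hc, if_neg hc]
      norm_num
  rw [h1]
  refine Finset.sum_bij' (fun p _ => p.2 ∪ p.1)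
    (fun I _ => (I.filter (fun i : Fin n => K ≤ i.val), I.filter (fun i : Fin n => i.val < K)))
    ?_ ?_ ?_ ?_ ?_
  · intro p hp
    obtain ⟨hmem, -, -⟩ := Finset.mem_filter.mp hp
    have hj1 : j ∈ p.1 := (Finset.mem_filter.mp (Finset.mem_product.mp hmem).1).2
    exact Finset.mem_filter.mpr ⟨Finset.mem_univ _, Finset.mem_union_right _ hj1⟩
  · intro I hI
    have hjI : j ∈ I := (Finset.mem_filter.mp hI).2
    refine Finset.mem_filter.mpr ⟨Finset.mem_product.mpr ⟨Finset.mem_filter.mpr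
      ⟨Finset.mem_univ _, Finset.mem_filter.mpr ⟨hjI, hj⟩⟩, Finset.mem_univ _⟩,
      fun i hi => (Finset.mem_filter.mp hi).2, fun i hi => (Finset.mem_filter.mp hi).2⟩
  · intro p hp
    obtain ⟨-, hc1, hc2⟩ := Finset.mem_filter.mp hp
    obtain ⟨e1, e2⟩ := filter_low_union K p.2 p.1 hc2 hc1
    exact Prod.ext e2 e1
  · intro I hI
    exact filter_split K I
  · intro p hp
    rfl

end Aux19

/-- restricting the first `K` variables of a degree-`d` multilinear
polynomial `P` to a uniformly random `x ∈ {-1,1}^K`, the fourth power of the weight of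
any coordinate `j > K` of the restricted polynomial satisfies
`E_X[w_j⁴(P_X)] ≤ 9^d w_j⁴(P)`. -/
theorem expected_fourth_weight_of_restriction (n d K : ℕ) (hK1 : 1 ≤ K) (hKn : K < n)
    (a : Finset (Fin n) → ℝ) (hdeg : DegLE a d) (j : Fin n) (hj : K ≤ j.val) :
    (1 / 2 ^ n : ℝ) * ∑ x : Fin n → Bool,
        (wsq (restCoeff a K (fun i => pmOne (x i))) j) ^ 2
      ≤ 9 ^ d * (wsq a j) ^ 2 := by
  classical
  have hN : (0:ℝ) < 2 ^ n := by positivity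
  have hW : ∀ x : Fin n → Bool, wsq (restCoeff a K (fun i => pmOne (x i))) j
      = ∑ J ∈ Finset.univ.filter (fun J : Finset (Fin n) => j ∈ J),
          feval (restC a K J) x ^ 2 := by
    intro x
    unfold wsq
    exact Finset.sum_congr rfl fun J _ => by rw [restCoeff_eq]; rfl
  have hT : ∑ J ∈ Finset.univ.filter (fun J : Finset (Fin n) => j ∈ J),
      ∑ x : Fin n → Bool, feval (restC a K J) x ^ 2 = 2 ^ n * wsq a j := by
    rw [Finset.sum_congr rfl (fun J _ => parseval (restC a K J)), ← Finset.mul_sum,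
      rest_weight a K j hj]
    rfl
  have h0 : ∀ x : Fin n → Bool, wsq (restCoeff a K (fun i => pmOne (x i))) j ^ 2
      = ∑ J ∈ Finset.univ.filter (fun J : Finset (Fin n) => j ∈ J),
          ∑ J' ∈ Finset.univ.filter (fun J : Finset (Fin n) => j ∈ J),
            feval (restC a K J) x ^ 2 * feval (restC a K J') x ^ 2 := by
    intro x
    rw [hW x, pow_two, Finset.sum_mul_sum]
  have h1 : ∑ x : Fin n → Bool, wsq (restCoeff a K (fun i => pmOne (x i))) j ^ 2
      = ∑ J ∈ Finset.univ.filter (fun J : Finset (Fin n) => j ∈ J),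
          ∑ J' ∈ Finset.univ.filter (fun J : Finset (Fin n) => j ∈ J),
            ∑ x : Fin n → Bool,
              feval (restC a K J) x ^ 2 * feval (restC a K J') x ^ 2 := by
    rw [Finset.sum_congr rfl (fun x _ => h0 x), Finset.sum_comm]
    exact Finset.sum_congr rfl fun J _ => Finset.sum_comm
  rw [one_div, inv_mul_le_iff₀ hN, h1, ← mul_le_mul_iff_right₀ hN]
  calc (2:ℝ)^n * ∑ J ∈ Finset.univ.filter (fun J : Finset (Fin n) => j ∈ J),
          ∑ J' ∈ Finset.univ.filter (fun J : Finset (Fin n) => j ∈ J),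
            ∑ x : Fin n → Bool,
              feval (restC a K J) x ^ 2 * feval (restC a K J') x ^ 2
      = ∑ J ∈ Finset.univ.filter (fun J : Finset (Fin n) => j ∈ J),
          ∑ J' ∈ Finset.univ.filter (fun J : Finset (Fin n) => j ∈ J),
            (2:ℝ)^n * ∑ x : Fin n → Bool,
              feval (restC a K J) x ^ 2 * feval (restC a K J') x ^ 2 := by
        rw [Finset.mul_sum]
        exact Finset.sum_congr rfl fun J _ => Finset.mul_sum _ _ _
    _ ≤ ∑ J ∈ Finset.univ.filter (fun J : Finset (Fin n) => j ∈ J),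
          ∑ J' ∈ Finset.univ.filter (fun J : Finset (Fin n) => j ∈ J),
            9^d * ((∑ x : Fin n → Bool, feval (restC a K J) x ^ 2)
              * ∑ x : Fin n → Bool, feval (restC a K J') x ^ 2) :=
        Finset.sum_le_sum fun J _ => Finset.sum_le_sum fun J' _ =>
          hyper_pair d _ _ (restC_deg a K d hdeg J) (restC_deg a K d hdeg J')
    _ = 9^d * ((∑ J ∈ Finset.univ.filter (fun J : Finset (Fin n) => j ∈ J),
            ∑ x : Fin n → Bool, feval (restC a K J) x ^ 2)
          * ∑ J ∈ Finset.univ.filter (fun J : Finset (Fin n) => j ∈ J),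
            ∑ x : Fin n → Bool, feval (restC a K J) x ^ 2) := by
        rw [Finset.sum_mul_sum, Finset.mul_sum]
        exact Finset.sum_congr rfl fun J _ => by rw [Finset.mul_sum]
    _ = 9^d * ((2^n * wsq a j) * (2^n * wsq a j)) := by rw [hT]
    _ = (2:ℝ)^n * ((2:ℝ)^n * (9 ^ d * wsq a j ^ 2)) := by ring

end
end
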